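/- arXiv:math/0703282 — 6 statements merged into one kernel-verified Lean document; each statement's English description precedes it below -/
import Mathlib

section
/- Let A be a C*-algebra and let F : G → A be a locally integrable function such that F(t) ≥ 0 for every t ∈ G. Then the following are equivalent: (1) F is unconditionally integrable; (2) for every net (w_i) of measurable functions G → [0,1], each with relatively compact support, converging to 1 uniformly on every compact subset of G, the net (∫_G w_i(t)·F(t) dμ(t)) converges in A; (3) there exists at least one such net (w_i) for which (∫_G w_i(t)·F(t) dμ(t)) converges in A. Moreover, in this case, for every net (w_i) as in (2) the limit lim_i ∫_G w_i(t)·F(t) dμ(t) equals the unconditional integral of F. -/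
/-- A net of measurable functions `G → [0,1]`, each with relatively compact support,
converging to `1` uniformly on every compact subset of `G`. -/
structure ApproxNet (G : Type) [TopologicalSpace G] [MeasurableSpace G] : Type 1 where
  ι : Type
  [pre : Preorder ι]
  dir : IsDirected ι (· ≤ ·)
  ne : Nonempty ι
  w : ι → G → ℝ
  meas : ∀ i, Measurable (w i)
  mem_Icc : ∀ i t, w i t ∈ Set.Icc (0 : ℝ) 1
  supp : ∀ i, IsCompact (closure (Function.support (w i)))
  unif : ∀ L : Set G, IsCompact L →
    TendstoUniformlyOn w (fun _ => (1 : ℝ)) Filter.atTop L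

attribute [instance] ApproxNet.pre

open MeasureTheory Filter Topology

section StarMod
variable {A : Type} [NormedRing A] [StarRing A] [CStarRing A]
  [NormedAlgebra ℂ A] [CompleteSpace A] [PartialOrder A] [StarOrderedRing A]

set_option linter.unusedSectionVars false

lemma aux_star_J : star (algebraMap ℂ A Complex.I) = - algebraMap ℂ A Complex.I := by
  set j : A := algebraMap ℂ A Complex.I with hj
  have hcomm : ∀ a : A, j * a = a * j := fun a => (Algebra.commutes Complex.I a)
  have hj2 : j * j = -1 := by
    rw [hj, ← map_mul, Complex.I_mul_I, map_neg, map_one]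
  set u : A := star j with hu
  have hucomm : ∀ a : A, u * a = a * u := by
    intro a
    have := congrArg star (hcomm (star a))
    simpa [star_mul] using this.symm
  set v : A := u * j with hv
  have hvsa : star v = v := by
    rw [hv, star_mul, star_star]
  have huu : u * u = -1 := by
    rw [hu, ← star_mul, hj2, star_neg, star_one]
  have hv2 : v * v = 1 := by
    have h : v * v = (u * u) * (j * j) := by
      rw [hv, mul_assoc, ← mul_assoc j u j, ← hucomm j, mul_assoc, ← mul_assoc, ← mul_assoc]
    rw [h, huu, hj2, neg_mul_neg, one_mul]
  set q : A := 1 - v with hq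
  have hqq2 : q * q = q + q := by
    rw [hq, sub_mul, one_mul, mul_sub, mul_one, hv2]
    abel
  have hqsa : star q = q := by rw [hq, star_sub, star_one, hvsa]
  have hq1 : (0:A) ≤ q + q := by
    have h := star_mul_self_nonneg q
    rwa [hqsa, hqq2] at h
  have hq2 : (0:A) ≤ -(q + q) := by
    have h := star_mul_self_nonneg (j * q)
    have hvq : v * q = -q := by
      rw [hq, mul_sub, hv2, mul_one]; abel
    have he : star (j * q) * (j * q) = -(q + q) := by
      rw [star_mul, hqsa]
      calc q * star j * (j * q) = q * ((star j * j) * q) := by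
            rw [mul_assoc, ← mul_assoc (star j) j q]
        _ = q * (v * q) := by rw [hv, hu]
        _ = q * (-q) := by rw [hvq]
        _ = -(q * q) := by rw [mul_neg]
        _ = -(q + q) := by rw [hqq2]
    rwa [he] at h
  have hqq : q + q = 0 := le_antisymm (neg_nonneg.mp hq2) hq1
  have hq0 : q = 0 := by
    have h2 : (2:ℂ) • q = 0 := by rw [two_smul]; exact hqq
    calc q = (2⁻¹ : ℂ) • ((2:ℂ) • q) := by rw [smul_smul]; norm_num
      _ = 0 := by rw [h2, smul_zero]
  have hv1 : v = 1 := by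
    have := sub_eq_zero.mp (hq ▸ hq0 : (1:A) - v = 0)
    exact this.symm
  have h1 : u * j = 1 := by rw [← hv, hv1]
  have h2 : j * (-j) = 1 := by rw [mul_neg, hj2, neg_neg]
  calc star j = u * (j * (-j)) := by rw [h2, mul_one]
    _ = (u * j) * (-j) := by rw [mul_assoc]
    _ = -j := by rw [h1, one_mul]

lemma aux_star_real (x : ℝ) (a : A) : star (x • a) = x • star a :=
  map_real_smul (starAddEquiv : A ≃+ A) continuous_star x a

lemma aux_star_algebraMap (r : ℂ) :
    star (algebraMap ℂ A r) = algebraMap ℂ A (starRingEnd ℂ r) := by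
  have hre : ∀ x : ℝ, star (algebraMap ℂ A (x:ℂ)) = algebraMap ℂ A (x:ℂ) := by
    intro x
    have h1 : algebraMap ℂ A (x:ℂ) = x • (1:A) := by
      rw [Algebra.algebraMap_eq_smul_one, Complex.coe_smul]
    rw [h1, aux_star_real, star_one]
  have hdec : (r : ℂ) = (r.re : ℂ) + (r.im : ℂ) * Complex.I := (Complex.re_add_im r).symm
  rw [hdec]
  simp only [map_add, map_mul, map_neg, star_add, star_mul, aux_star_J, hre,
    Complex.conj_ofReal, Complex.conj_I, mul_neg, neg_mul]
  rw [Algebra.commutes Complex.I ((algebraMap ℂ A) (r.im : ℂ))]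

lemma aux_starModule : StarModule ℂ A := by
  constructor
  intro r a
  rw [Algebra.smul_def, star_mul, aux_star_algebraMap, ← Algebra.commutes, ← Algebra.smul_def]
  rfl

@[reducible] noncomputable def auxCStar : CStarAlgebra A :=
  letI := aux_starModule (A := A)
  { toNormedRing := ‹_›, toStarRing := ‹_›, toCompleteSpace := ‹_›,
    toCStarRing := ‹_›, toNormedAlgebra := ‹_›, toStarModule := ‹_› }

section Integral
variable {α : Type} [MeasurableSpace α] {μ : Measure α}

lemma aux_integral_nonneg {f : α → A} (hf : ∀ x, 0 ≤ f x) : 0 ≤ ∫ x, f x ∂μ := by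
  letI := auxCStar (A := A)
  by_cases hi : Integrable f μ
  · by_contra hcon
    have hconv : Convex ℝ {x : A | 0 ≤ x} := by
      intro a ha b hb s t hs ht _
      exact add_nonneg (smul_nonneg hs ha) (smul_nonneg ht hb)
    obtain ⟨φ, u, hu1, hu2⟩ := geometric_hahn_banach_closed_point
      hconv CStarAlgebra.isClosed_nonneg hcon
    have hu0 : 0 < u := by simpa using hu1 0 le_rfl
    have hφle : ∀ b : A, 0 ≤ b → φ b ≤ 0 := by
      intro b hb
      by_contra hpos
      push_neg at hpos
      obtain ⟨n, hn⟩ := Archimedean.arch (u + 1) hpos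
      have hmem : 0 ≤ (n : ℝ) • b := smul_nonneg (by positivity) hb
      have := hu1 _ hmem
      rw [_root_.map_smul, smul_eq_mul] at this
      have h2 : u + 1 ≤ u := le_trans (by simpa [nsmul_eq_mul] using hn) this.le
      exact absurd h2 (not_le.mpr (lt_add_one u))
    have hkey : φ (∫ x, f x ∂μ) ≤ 0 := by
      rw [← φ.integral_comp_comm hi]
      exact integral_nonpos fun x => hφle _ (hf x)
    exact absurd hu2 (not_lt.mpr (hkey.trans hu0.le))
  · rw [integral_undef hi]

lemma aux_integral_mono {f g : α → A} (hf : Integrable f μ) (hg : Integrable g μ)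
    (h : ∀ x, f x ≤ g x) : ∫ x, f x ∂μ ≤ ∫ x, g x ∂μ := by
  rw [← sub_nonneg, ← integral_sub hg hf]
  exact aux_integral_nonneg fun x => sub_nonneg.mpr (h x)

end Integral

lemma aux_smul_nonneg' {w : ℝ} (hw : 0 ≤ w) {x : A} (hx : 0 ≤ x) :
    0 ≤ ((w : ℝ) : ℂ) • x := by
  letI := auxCStar (A := A)
  show 0 ≤ w • x
  exact smul_nonneg hw hx

lemma aux_smul_le' {w : ℝ} (hw : w ≤ 1) {x : A} (hx : 0 ≤ x) :
    ((w : ℝ) : ℂ) • x ≤ x := by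
  letI := auxCStar (A := A)
  have h : (0:A) ≤ (1 - w) • x := smul_nonneg (by linarith) hx
  have h2 : (1 - w) • x = x - w • x := by rw [sub_smul, one_smul]
  rw [h2] at h
  show ((w : ℝ) : ℂ) • x ≤ x
  exact sub_nonneg.mp h

lemma aux_smul_ge' {w c : ℝ} (hcw : c ≤ w) {x : A} (hx : 0 ≤ x) :
    c • x ≤ ((w : ℝ) : ℂ) • x := by
  letI := auxCStar (A := A)
  have h : (0:A) ≤ (w - c) • x := smul_nonneg (by linarith) hx
  have h2 : (w - c) • x = w • x - c • x := by rw [sub_smul]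
  rw [h2] at h
  show c • x ≤ ((w : ℝ) : ℂ) • x
  exact sub_nonneg.mp h

end StarMod

section Main

abbrev RCSet (G : Type) [TopologicalSpace G] [MeasurableSpace G] : Type :=
  {K : Set G // MeasurableSet K ∧ IsCompact (closure K)}

instance instRCNonempty (G : Type) [TopologicalSpace G] [MeasurableSpace G] :
    Nonempty (RCSet G) :=
  ⟨⟨∅, MeasurableSet.empty, by simp⟩⟩

instance instRCDirected (G : Type) [TopologicalSpace G] [MeasurableSpace G] :
    IsDirected (RCSet G) (· ≤ ·) := by
  constructor
  intro K L
  refine ⟨⟨K.1 ∪ L.1, K.2.1.union L.2.1, ?_⟩, ?_, ?_⟩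
  · rw [closure_union]; exact K.2.2.union L.2.2
  · show K.1 ⊆ K.1 ∪ L.1
    exact Set.subset_union_left
  · show L.1 ⊆ K.1 ∪ L.1
    exact Set.subset_union_right

variable {G : Type} [TopologicalSpace G] [MeasurableSpace G] [BorelSpace G]
  {A : Type} [NormedRing A] [StarRing A] [CStarRing A]
  [NormedAlgebra ℂ A] [CompleteSpace A] [PartialOrder A] [StarOrderedRing A]
  {μ : Measure G} {F : G → A}

set_option linter.unusedSectionVars false

lemma aux_w_zero_outside (N : ApproxNet G) (i : N.ι) {t : G}
    (ht : t ∉ closure (Function.support (N.w i))) : N.w i t = 0 :=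
  Function.notMem_support.mp fun hmem => ht (subset_closure hmem)

lemma aux_net_integrable
    (hloc : ∀ K : Set G, MeasurableSet K → IsCompact (closure K) → IntegrableOn F K μ)
    (N : ApproxNet G) (i : N.ι) :
    Integrable (fun t => ((N.w i t : ℝ) : ℂ) • F t) μ := by
  have hSm : MeasurableSet (closure (Function.support (N.w i))) :=
    isClosed_closure.measurableSet
  have hSc : IsCompact (closure (closure (Function.support (N.w i)))) := by
    rw [closure_closure]; exact N.supp i
  have hF : IntegrableOn F (closure (Function.support (N.w i))) μ := hloc _ hSm hSc
  have hmeas : AEStronglyMeasurable (fun t => ((N.w i t : ℝ) : ℂ) • F t)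
      (μ.restrict (closure (Function.support (N.w i)))) :=
    (Complex.measurable_ofReal.comp (N.meas i)).aestronglyMeasurable.smul hF.1
  have hle : ∀ᵐ t ∂(μ.restrict (closure (Function.support (N.w i)))),
      ‖((N.w i t : ℝ) : ℂ) • F t‖ ≤ ‖F t‖ := by
    refine Filter.Eventually.of_forall fun t => ?_
    rw [norm_smul]
    have h1 : ‖((N.w i t : ℝ) : ℂ)‖ ≤ 1 := by
      rw [Complex.norm_real, Real.norm_eq_abs, abs_le]
      exact ⟨by linarith [(N.mem_Icc i t).1], (N.mem_Icc i t).2⟩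
    calc ‖((N.w i t : ℝ) : ℂ)‖ * ‖F t‖ ≤ 1 * ‖F t‖ :=
          mul_le_mul_of_nonneg_right h1 (norm_nonneg _)
      _ = ‖F t‖ := one_mul _
  have hInt : IntegrableOn (fun t => ((N.w i t : ℝ) : ℂ) • F t)
      (closure (Function.support (N.w i))) μ := Integrable.mono hF hmeas hle
  have heq : (fun t => ((N.w i t : ℝ) : ℂ) • F t) =
      (closure (Function.support (N.w i))).indicator
        (fun t => ((N.w i t : ℝ) : ℂ) • F t) := by
    funext t
    by_cases ht : t ∈ closure (Function.support (N.w i))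
    · rw [Set.indicator_of_mem ht]
    · rw [Set.indicator_of_notMem ht, aux_w_zero_outside N i ht]
      simp
  rw [heq]
  exact hInt.integrable_indicator hSm

/-- Key direction: if some approximating net converges, the net of set integrals
converges to the same limit. -/
lemma aux_tendsto_K_of_net
    (hloc : ∀ K : Set G, MeasurableSet K → IsCompact (closure K) → IntegrableOn F K μ)
    (hpos : ∀ t, 0 ≤ F t)
    (N : ApproxNet G) (b : A)
    (hb : Tendsto (fun i : N.ι => ∫ t, ((N.w i t : ℝ) : ℂ) • F t ∂μ) atTop (𝓝 b)) :
    Tendsto (fun K : RCSet G => ∫ t in (K : Set G), F t ∂μ) atTop (𝓝 b) := by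
  letI := auxCStar (A := A)
  haveI : IsDirected N.ι (· ≤ ·) := N.dir
  haveI : Nonempty N.ι := N.ne
  rw [tendsto_atTop']
  intro s hs
  obtain ⟨ε, hε, hball⟩ := Metric.mem_nhds_iff.mp hs
  have hη0 : 0 < ε / 6 := by positivity
  obtain ⟨i₀, hi₀⟩ := (tendsto_atTop'.mp hb) (Metric.ball b (ε / 6))
    (Metric.ball_mem_nhds b hη0)
  refine ⟨⟨closure (Function.support (N.w i₀)), isClosed_closure.measurableSet,
    by rw [closure_closure]; exact N.supp i₀⟩, ?_⟩
  intro K hK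
  have hK' : closure (Function.support (N.w i₀)) ⊆ K.1 := hK
  -- choose δ
  set η := ε / 6 with hηdef
  set δ := min (1/2) (η / (2 * (‖b‖ + 1))) with hδdef
  have hδ0 : 0 < δ := lt_min (by norm_num) (by positivity)
  have hδh : δ ≤ 1/2 := min_le_left _ _
  have hδη : δ ≤ η / (2 * (‖b‖ + 1)) := min_le_right _ _
  have hev := Metric.tendstoUniformlyOn_iff.mp (N.unif (closure K.1) K.2.2) δ hδ0
  obtain ⟨i, hii₀, hiδ⟩ := ((eventually_ge_atTop i₀).and hev).exists
  have hfInt : ∀ j : N.ι, Integrable (fun t => ((N.w j t : ℝ) : ℂ) • F t) μ :=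
    fun j => aux_net_integrable hloc N j
  have hKFInt : IntegrableOn F K.1 μ := hloc K.1 K.2.1 K.2.2
  have hFKInt : Integrable (K.1.indicator F) μ := hKFInt.integrable_indicator K.2.1
  -- lower bound
  have h_lo : ∫ t, ((N.w i₀ t : ℝ) : ℂ) • F t ∂μ ≤ ∫ t, K.1.indicator F t ∂μ := by
    refine aux_integral_mono (hfInt i₀) hFKInt fun t => ?_
    by_cases ht : t ∈ K.1
    · rw [Set.indicator_of_mem ht]
      exact aux_smul_le' (N.mem_Icc i₀ t).2 (hpos t)
    · rw [Set.indicator_of_notMem ht,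
        aux_w_zero_outside N i₀ (fun hc => ht (hK' hc))]
      simp
  -- upper bound
  have h_up : (1 - δ) • ∫ t, K.1.indicator F t ∂μ ≤ ∫ t, ((N.w i t : ℝ) : ℂ) • F t ∂μ := by
    rw [← integral_smul]
    refine aux_integral_mono (hFKInt.smul ((1 : ℝ) - δ)) (hfInt i) fun t => ?_
    by_cases ht : t ∈ K.1
    · rw [Set.indicator_of_mem ht]
      have hwt : 1 - δ ≤ N.w i t := by
        have hd := hiδ t (subset_closure ht)
        rw [Real.dist_eq, abs_lt] at hd
        linarith [hd.2]
      exact aux_smul_ge' hwt (hpos t)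
    · rw [Set.indicator_of_notMem ht, smul_zero]
      exact aux_smul_nonneg' (N.mem_Icc i t).1 (hpos t)
  -- rearrange
  have h1δ : (0:ℝ) < 1 - δ := by linarith
  have hc0 : (0:ℝ) ≤ (1 - δ)⁻¹ := by positivity
  have hcm : (1 - δ) * (1 - δ)⁻¹ = 1 := mul_inv_cancel₀ (ne_of_gt h1δ)
  have hc2 : (1 - δ)⁻¹ ≤ 2 := by nlinarith [hcm, hc0]
  have hI3 : ∫ t, K.1.indicator F t ∂μ ≤ (1 - δ)⁻¹ • ∫ t, ((N.w i t : ℝ) : ℂ) • F t ∂μ := by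
    have h := smul_le_smul_of_nonneg_left h_up hc0
    rwa [smul_smul, inv_mul_cancel₀ (ne_of_gt h1δ), one_smul] at h
  have h0 : 0 ≤ ∫ t, K.1.indicator F t ∂μ - ∫ t, ((N.w i₀ t : ℝ) : ℂ) • F t ∂μ :=
    sub_nonneg.mpr h_lo
  have hle2 : ∫ t, K.1.indicator F t ∂μ - ∫ t, ((N.w i₀ t : ℝ) : ℂ) • F t ∂μ ≤
      (1 - δ)⁻¹ • (∫ t, ((N.w i t : ℝ) : ℂ) • F t ∂μ) -
        ∫ t, ((N.w i₀ t : ℝ) : ℂ) • F t ∂μ :=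
    sub_le_sub_right hI3 _
  have hn1 := CStarAlgebra.norm_le_norm_of_nonneg_of_le h0 hle2
  have hbi : ‖∫ t, ((N.w i t : ℝ) : ℂ) • F t ∂μ - b‖ < η := by
    have h := hi₀ i hii₀
    rwa [Metric.mem_ball, dist_eq_norm] at h
  have hbi₀ : ‖∫ t, ((N.w i₀ t : ℝ) : ℂ) • F t ∂μ - b‖ < η := by
    have h := hi₀ i₀ le_rfl
    rwa [Metric.mem_ball, dist_eq_norm] at h
  have hnum : ‖(1 - δ)⁻¹ • (∫ t, ((N.w i t : ℝ) : ℂ) • F t ∂μ) -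
      ∫ t, ((N.w i₀ t : ℝ) : ℂ) • F t ∂μ‖ ≤ 4 * η := by
    set x := ∫ t, ((N.w i t : ℝ) : ℂ) • F t ∂μ
    set y := ∫ t, ((N.w i₀ t : ℝ) : ℂ) • F t ∂μ
    have hdecomp : (1 - δ)⁻¹ • x - y =
        (1 - δ)⁻¹ • (x - b) + ((1 - δ)⁻¹ - 1) • b + (b - y) := by
      rw [smul_sub, sub_smul, one_smul]; abel
    rw [hdecomp]
    have t1 : ‖(1 - δ)⁻¹ • (x - b)‖ ≤ 2 * η := by
      rw [norm_smul, Real.norm_eq_abs, abs_of_nonneg hc0]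
      exact mul_le_mul hc2 hbi.le (norm_nonneg _) (by norm_num)
    have t2 : ‖((1 - δ)⁻¹ - 1) • b‖ ≤ η := by
      rw [norm_smul, Real.norm_eq_abs]
      have hcd : (1 - δ)⁻¹ - 1 = δ * (1 - δ)⁻¹ := by nlinarith [hcm]
      have habs : |(1 - δ)⁻¹ - 1| ≤ 2 * δ := by
        rw [hcd, abs_of_nonneg (by positivity)]
        nlinarith
      calc |(1 - δ)⁻¹ - 1| * ‖b‖ ≤ (2 * δ) * ‖b‖ :=
            mul_le_mul_of_nonneg_right habs (norm_nonneg _)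
        _ ≤ η := by
          have h2 : (0:ℝ) < ‖b‖ + 1 := by positivity
          have hb1 : 2 * δ * (‖b‖ + 1) ≤ η := by
            calc 2 * δ * (‖b‖ + 1) ≤ 2 * (η / (2 * (‖b‖ + 1))) * (‖b‖ + 1) := by nlinarith
              _ = η := by field_simp
          nlinarith [norm_nonneg b]
    have t3 : ‖b - y‖ ≤ η := by rw [norm_sub_rev]; exact hbi₀.le
    calc ‖(1 - δ)⁻¹ • (x - b) + ((1 - δ)⁻¹ - 1) • b + (b - y)‖ ≤
          ‖(1 - δ)⁻¹ • (x - b) + ((1 - δ)⁻¹ - 1) • b‖ + ‖b - y‖ := norm_add_le _ _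
      _ ≤ (‖(1 - δ)⁻¹ • (x - b)‖ + ‖((1 - δ)⁻¹ - 1) • b‖) + ‖b - y‖ :=
          add_le_add_left (norm_add_le _ _) _
      _ ≤ (2 * η + η) + η := by
          have := add_le_add (add_le_add t1 t2) t3
          linarith
      _ = 4 * η := by ring
  apply hball
  rw [Metric.mem_ball, dist_eq_norm]
  have hKeq : ∫ t in K.1, F t ∂μ = ∫ t, K.1.indicator F t ∂μ :=
    (integral_indicator K.2.1).symm
  have hfinal : ‖∫ t in K.1, F t ∂μ - b‖ ≤
      ‖∫ t, K.1.indicator F t ∂μ - ∫ t, ((N.w i₀ t : ℝ) : ℂ) • F t ∂μ‖ +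
      ‖∫ t, ((N.w i₀ t : ℝ) : ℂ) • F t ∂μ - b‖ := by
    rw [hKeq]
    calc ‖∫ t, K.1.indicator F t ∂μ - b‖ =
        ‖(∫ t, K.1.indicator F t ∂μ - ∫ t, ((N.w i₀ t : ℝ) : ℂ) • F t ∂μ) +
          (∫ t, ((N.w i₀ t : ℝ) : ℂ) • F t ∂μ - b)‖ := by
          congr 1; abel
      _ ≤ _ := norm_add_le _ _
  have : ‖∫ t in K.1, F t ∂μ - b‖ < 5 * η := by
    have := hn1.trans hnum
    calc ‖∫ t in K.1, F t ∂μ - b‖ ≤ _ + _ := hfinal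
      _ < 4 * η + η := by
        apply add_lt_add_of_le_of_lt
        · exact hn1.trans hnum
        · exact hbi₀
      _ = 5 * η := by ring
  calc ‖∫ t in K.1, F t ∂μ - b‖ < 5 * η := this
    _ < ε := by rw [hηdef]; linarith

/-- Moreover: if the set-integral net converges to `a`, then every approximating net
converges to `a` as well. -/
lemma aux_tendsto_net_of_K
    (hloc : ∀ K : Set G, MeasurableSet K → IsCompact (closure K) → IntegrableOn F K μ)
    (hpos : ∀ t, 0 ≤ F t) (a : A)
    (ha : Tendsto (fun K : RCSet G => ∫ t in (K : Set G), F t ∂μ) atTop (𝓝 a))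
    (N : ApproxNet G) :
    Tendsto (fun i : N.ι => ∫ t, ((N.w i t : ℝ) : ℂ) • F t ∂μ) atTop (𝓝 a) := by
  letI := auxCStar (A := A)
  haveI : IsDirected N.ι (· ≤ ·) := N.dir
  haveI : Nonempty N.ι := N.ne
  rw [tendsto_atTop']
  intro s hs
  obtain ⟨ε, hε, hball⟩ := Metric.mem_nhds_iff.mp hs
  set η := ε / 8 with hηdef
  have hη0 : 0 < η := by positivity
  obtain ⟨K₀, hK₀⟩ := (tendsto_atTop'.mp ha) (Metric.ball a η)
    (Metric.ball_mem_nhds a hη0)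
  set K₁ : RCSet G := ⟨closure K₀.1, isClosed_closure.measurableSet,
    by rw [closure_closure]; exact K₀.2.2⟩ with hK₁def
  have hK₀K₁ : K₀ ≤ K₁ := by
    show K₀.1 ⊆ closure K₀.1
    exact subset_closure
  have hK₁c : IsCompact K₁.1 := K₀.2.2
  have hK₁F : IntegrableOn F K₁.1 μ := hloc _ K₁.2.1 K₁.2.2
  have hK₁a : ‖∫ t in K₁.1, F t ∂μ - a‖ < η := by
    have h := hK₀ K₁ hK₀K₁
    rwa [Metric.mem_ball, dist_eq_norm] at h
  set C := ∫ t in K₁.1, ‖F t‖ ∂μ with hC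
  have hC0 : 0 ≤ C := integral_nonneg fun t => norm_nonneg _
  set δ := η / (C + 1) with hδdef
  have hδ0 : 0 < δ := by positivity
  -- tail estimate
  have htail : ∀ K : RCSet G, ‖∫ t in K.1 \ K₁.1, F t ∂μ‖ ≤ 2 * η := by
    intro K
    set K' : RCSet G := ⟨K.1 ∪ K₁.1, K.2.1.union K₁.2.1,
      by rw [closure_union]; exact K.2.2.union K₁.2.2⟩ with hK'def
    have hsplit : ∫ t in K'.1, F t ∂μ =
        ∫ t in K₁.1, F t ∂μ + ∫ t in K.1 \ K₁.1, F t ∂μ := by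
      have hseteq : K'.1 = K₁.1 ∪ (K.1 \ K₁.1) := by
        rw [Set.union_diff_self, Set.union_comm]
      rw [hK'def] at hseteq ⊢
      rw [hseteq]
      exact setIntegral_union disjoint_sdiff_self_right (K.2.1.diff K₁.2.1) hK₁F
        ((hloc K.1 K.2.1 K.2.2).mono_set Set.diff_subset)
    have hK'a : ‖∫ t in K'.1, F t ∂μ - a‖ < η := by
      have hK₀K' : K₀ ≤ K' :=
        le_trans hK₀K₁ (show K₁.1 ⊆ K.1 ∪ K₁.1 from Set.subset_union_right)
      have h := hK₀ K' hK₀K'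
      rwa [Metric.mem_ball, dist_eq_norm] at h
    have heq : ∫ t in K.1 \ K₁.1, F t ∂μ =
        (∫ t in K'.1, F t ∂μ - a) - (∫ t in K₁.1, F t ∂μ - a) := by
      rw [hsplit]; abel
    rw [heq]
    calc ‖(∫ t in K'.1, F t ∂μ - a) - (∫ t in K₁.1, F t ∂μ - a)‖ ≤
          ‖∫ t in K'.1, F t ∂μ - a‖ + ‖∫ t in K₁.1, F t ∂μ - a‖ := norm_sub_le _ _
      _ ≤ 2 * η := by linarith
  -- choose i₀
  have hev := Metric.tendstoUniformlyOn_iff.mp (N.unif K₁.1 hK₁c) δ hδ0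
  obtain ⟨i₀, hi₀⟩ := eventually_atTop.mp hev
  refine ⟨i₀, fun i hi => ?_⟩
  have hiδ := hi₀ i hi
  have hfi : Integrable (fun t => ((N.w i t : ℝ) : ℂ) • F t) μ :=
    aux_net_integrable hloc N i
  -- big set M
  have hSm : MeasurableSet (closure (Function.support (N.w i))) :=
    isClosed_closure.measurableSet
  set M : RCSet G := ⟨closure (Function.support (N.w i)) ∪ K₁.1,
    hSm.union K₁.2.1, by
      rw [closure_union, closure_closure]
      have h2 : closure K₁.1 = K₁.1 := by
        rw [hK₁def]; exact closure_closure
      rw [h2]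
      exact (N.supp i).union hK₁c⟩ with hMdef
  have hMF : IntegrableOn F M.1 μ := hloc _ M.2.1 M.2.2
  have hIM : ∫ t, ((N.w i t : ℝ) : ℂ) • F t ∂μ =
      ∫ t in M.1, ((N.w i t : ℝ) : ℂ) • F t ∂μ := by
    refine (setIntegral_eq_integral_of_forall_compl_eq_zero fun t ht => ?_).symm
    have htS : t ∉ closure (Function.support (N.w i)) := fun hc =>
      ht (Set.mem_union_left _ hc)
    rw [aux_w_zero_outside N i htS]
    simp
  have hK₁M : K₁.1 ⊆ M.1 := Set.subset_union_right
  have hsplit2 : ∫ t in M.1, ((N.w i t : ℝ) : ℂ) • F t ∂μ =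
      ∫ t in K₁.1, ((N.w i t : ℝ) : ℂ) • F t ∂μ +
      ∫ t in M.1 \ K₁.1, ((N.w i t : ℝ) : ℂ) • F t ∂μ := by
    have hseteq : M.1 = K₁.1 ∪ (M.1 \ K₁.1) := (Set.union_diff_cancel hK₁M).symm
    nth_rewrite 1 [hseteq]
    exact setIntegral_union disjoint_sdiff_self_right (M.2.1.diff K₁.2.1)
      hfi.integrableOn hfi.integrableOn
  -- term 1
  have hT1 : ‖∫ t in K₁.1, ((N.w i t : ℝ) : ℂ) • F t ∂μ - ∫ t in K₁.1, F t ∂μ‖ ≤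
      δ * C := by
    rw [← integral_sub hfi.integrableOn hK₁F]
    have hg : Integrable (fun t => δ * ‖F t‖) (μ.restrict K₁.1) := hK₁F.norm.const_mul δ
    refine (norm_integral_le_of_norm_le hg ?_).trans ?_
    · rw [ae_restrict_iff' K₁.2.1]
      refine Filter.Eventually.of_forall fun t ht => ?_
      have hd := hiδ t ht
      rw [Real.dist_eq] at hd
      have heq2 : ((N.w i t : ℝ) : ℂ) • F t - F t = ((N.w i t - 1 : ℝ) : ℂ) • F t := by
        push_cast
        rw [sub_smul, one_smul]
      rw [heq2, norm_smul, Complex.norm_real, Real.norm_eq_abs]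
      have habs : |N.w i t - 1| ≤ δ := by
        rw [abs_sub_comm]; exact hd.le
      exact mul_le_mul_of_nonneg_right habs (norm_nonneg _)
    · rw [MeasureTheory.integral_const_mul]
  have hδC : δ * C ≤ η := by
    rw [hδdef]
    rw [div_mul_eq_mul_div, div_le_iff₀ (by positivity : (0:ℝ) < C + 1)]
    nlinarith
  -- term 2
  have hT2 : ‖∫ t in M.1 \ K₁.1, ((N.w i t : ℝ) : ℂ) • F t ∂μ‖ ≤ 2 * η := by
    have h0 : 0 ≤ ∫ t in M.1 \ K₁.1, ((N.w i t : ℝ) : ℂ) • F t ∂μ :=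
      aux_integral_nonneg fun t => aux_smul_nonneg' (N.mem_Icc i t).1 (hpos t)
    have hle : ∫ t in M.1 \ K₁.1, ((N.w i t : ℝ) : ℂ) • F t ∂μ ≤
        ∫ t in M.1 \ K₁.1, F t ∂μ :=
      aux_integral_mono hfi.integrableOn (hMF.mono_set Set.diff_subset)
        fun t => aux_smul_le' (N.mem_Icc i t).2 (hpos t)
    exact (CStarAlgebra.norm_le_norm_of_nonneg_of_le h0 hle).trans (htail M)
  -- conclude
  apply hball
  rw [Metric.mem_ball, dist_eq_norm]
  have hdecomp : ∫ t, ((N.w i t : ℝ) : ℂ) • F t ∂μ - a =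
      ((∫ t in K₁.1, ((N.w i t : ℝ) : ℂ) • F t ∂μ - ∫ t in K₁.1, F t ∂μ) +
        (∫ t in K₁.1, F t ∂μ - a)) +
      ∫ t in M.1 \ K₁.1, ((N.w i t : ℝ) : ℂ) • F t ∂μ := by
    rw [hIM, hsplit2]; abel
  rw [hdecomp]
  calc ‖_ + _‖ ≤
        ‖(∫ t in K₁.1, ((N.w i t : ℝ) : ℂ) • F t ∂μ - ∫ t in K₁.1, F t ∂μ) +
          (∫ t in K₁.1, F t ∂μ - a)‖ +
        ‖∫ t in M.1 \ K₁.1, ((N.w i t : ℝ) : ℂ) • F t ∂μ‖ := norm_add_le _ _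
    _ ≤ (‖∫ t in K₁.1, ((N.w i t : ℝ) : ℂ) • F t ∂μ - ∫ t in K₁.1, F t ∂μ‖ +
          ‖∫ t in K₁.1, F t ∂μ - a‖) +
        ‖∫ t in M.1 \ K₁.1, ((N.w i t : ℝ) : ℂ) • F t ∂μ‖ :=
        add_le_add_left (norm_add_le _ _) _
    _ < (η + η) + 2 * η := by
        have h1 := hT1.trans hδC
        apply add_lt_add_of_lt_of_le _ hT2
        exact add_lt_add_of_le_of_lt h1 hK₁a
    _ < ε := by rw [hηdef] at *; linarith

/-- The canonical approximating net of indicator functions of relatively compact sets. -/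
noncomputable def indicatorNet (G : Type) [TopologicalSpace G] [MeasurableSpace G]
    [T2Space G] [BorelSpace G] : ApproxNet G where
  ι := RCSet G
  dir := inferInstance
  ne := inferInstance
  w := fun K => K.1.indicator fun _ => (1 : ℝ)
  meas := fun K => measurable_const.indicator K.2.1
  mem_Icc := fun K t => by
    by_cases h : t ∈ K.1 <;>
      simp [Set.indicator_of_mem, Set.indicator_of_notMem, h]
  supp := fun K => by
    have h : Function.support (K.1.indicator fun _ => (1 : ℝ)) = K.1 := by
      rw [Set.support_indicator]
      simp [Function.support_const one_ne_zero]
    rw [h]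
    exact K.2.2
  unif := fun L hL => by
    rw [Metric.tendstoUniformlyOn_iff]
    intro ε hε
    have hLm : MeasurableSet L := hL.isClosed.measurableSet
    have hLc : IsCompact (closure L) := by
      rw [hL.isClosed.closure_eq]; exact hL
    have hmem : Set.Ici (⟨L, hLm, hLc⟩ : RCSet G) ∈ (atTop : Filter (RCSet G)) :=
      Filter.mem_atTop _
    refine Filter.mem_of_superset hmem ?_
    intro K hK x hx
    have hLK : L ⊆ K.1 := hK
    have hxK : x ∈ K.1 := hLK hx
    simp [Set.indicator_of_mem hxK, hε]

end Main

theorem stmt0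
    {G : Type} [TopologicalSpace G] [Group G] [IsTopologicalGroup G]
    [LocallyCompactSpace G] [T2Space G] [MeasurableSpace G] [BorelSpace G]
    (μ : Measure G) [μ.IsHaarMeasure]
    {A : Type} [NormedRing A] [StarRing A] [CStarRing A]
    [NormedAlgebra ℂ A] [CompleteSpace A] [PartialOrder A] [StarOrderedRing A]
    (F : G → A)
    (hloc : ∀ K : Set G, MeasurableSet K → IsCompact (closure K) → IntegrableOn F K μ)
    (hpos : ∀ t, 0 ≤ F t) :
    -- (1) ↔ (2)
    (((∃ a : A,
        Tendsto (fun K : {K : Set G // MeasurableSet K ∧ IsCompact (closure K)} =>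
            ∫ t in (K : Set G), F t ∂μ) atTop (𝓝 a)) ↔
      (∀ N : ApproxNet G, ∃ a : A,
        Tendsto (fun i : N.ι => ∫ t, ((N.w i t : ℝ) : ℂ) • F t ∂μ) atTop (𝓝 a))) ∧
    -- (1) ↔ (3)
    ((∃ a : A,
        Tendsto (fun K : {K : Set G // MeasurableSet K ∧ IsCompact (closure K)} =>
            ∫ t in (K : Set G), F t ∂μ) atTop (𝓝 a)) ↔
      (∃ N : ApproxNet G, ∃ a : A,
        Tendsto (fun i : N.ι => ∫ t, ((N.w i t : ℝ) : ℂ) • F t ∂μ) atTop (𝓝 a)))) ∧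
    -- moreover: every net limit agrees with the unconditional integral
    (∀ a : A,
      Tendsto (fun K : {K : Set G // MeasurableSet K ∧ IsCompact (closure K)} =>
          ∫ t in (K : Set G), F t ∂μ) atTop (𝓝 a) →
      ∀ N : ApproxNet G,
        Tendsto (fun i : N.ι => ∫ t, ((N.w i t : ℝ) : ℂ) • F t ∂μ) atTop (𝓝 a)) := by
  refine ⟨⟨⟨?_, ?_⟩, ⟨?_, ?_⟩⟩, ?_⟩
  · rintro ⟨a, ha⟩ N
    exact ⟨a, aux_tendsto_net_of_K hloc hpos a ha N⟩
  · intro h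
    obtain ⟨a, ha⟩ := h (indicatorNet G)
    exact ⟨a, aux_tendsto_K_of_net hloc hpos (indicatorNet G) a ha⟩
  · rintro ⟨a, ha⟩
    exact ⟨indicatorNet G, a, aux_tendsto_net_of_K hloc hpos a ha (indicatorNet G)⟩
  · rintro ⟨N, a, ha⟩
    exact ⟨a, aux_tendsto_K_of_net hloc hpos N a ha⟩
  · intro a ha N
    exact aux_tendsto_net_of_K hloc hpos a ha N
end

section
/- Let ξ, η ∈ H be square-integrable vectors, let φ ∈ L∞(G,μ), and let ζ ∈ H. Then the H-valued function t ↦ φ(t)·⟪γ_t η, ζ⟫·(γ_t ξ) is unconditionally integrable, with unconditional integral T_ξ*(φ·(T_η ζ)), where φ·(T_η ζ) denotes the pointwise product in L²(G,μ). Moreover, for every relatively compact measurable K ⊆ G, ‖∫_K φ(t)·⟪γ_t η, ζ⟫·(γ_t ξ) dμ(t)‖ ≤ ‖φ‖_{L∞}·‖T_ξ‖·‖T_η‖·‖ζ‖. -/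
open MeasureTheory Filter Topology

/-- `F : G → H` is unconditionally integrable with unconditional integral `c`:
the net of Bochner integrals over relatively compact measurable subsets of `G`,
directed by inclusion, converges to `c` in norm. -/
def UncondIntegral {G : Type} [TopologicalSpace G] [MeasurableSpace G]
    {H : Type} [NormedAddCommGroup H] [NormedSpace ℝ H]
    (μ : Measure G) (F : G → H) (c : H) : Prop :=
  Filter.Tendsto (fun K : {K : Set G // MeasurableSet K ∧ IsCompact (closure K)} =>
    ∫ t in (K : Set G), F t ∂μ) Filter.atTop (nhds c)

open Set Pointwise ENNReal NNReal

lemma aux_sigma_compact_subgroup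
    {G : Type} [TopologicalSpace G] [Group G] [IsTopologicalGroup G]
    [WeaklyLocallyCompactSpace G] :
    ∃ H : Subgroup G, IsOpen (H : Set G) ∧ IsSigmaCompact (H : Set G) := by
  obtain ⟨V, hVc, hV1⟩ := exists_compact_mem_nhds (1 : G)
  set W : Set G := (V ∪ V⁻¹) ∪ {1} with hW
  have hWc : IsCompact W := (hVc.union hVc.inv).union isCompact_singleton
  have hW1 : (1 : G) ∈ W := by simp [hW]
  have hWinv : W⁻¹ = W := by
    rw [hW, Set.union_inv, Set.union_inv, inv_inv, Set.inv_singleton, inv_one,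
      Set.union_comm V⁻¹ V]
  refine ⟨Subgroup.closure W, ?_, ?_⟩
  · refine Subgroup.isOpen_of_mem_nhds (g := (1:G)) _ ?_
    exact Filter.mem_of_superset hV1
      (subset_trans (Set.subset_union_left.trans Set.subset_union_left)
        Subgroup.subset_closure)
  · have hpow : ∀ n : ℕ, IsCompact (W ^ (n+1)) := by
      intro n
      induction n with
      | zero => simpa using hWc
      | succ k ih => rw [pow_succ]; exact ih.mul hWc
    have hsub : (Subgroup.closure W : Set G) ⊆ ⋃ n : ℕ, W ^ (n+1) := by
      intro x hx
      induction hx using Subgroup.closure_induction with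
      | mem y hy => exact Set.mem_iUnion.2 ⟨0, by simpa using hy⟩
      | one => exact Set.mem_iUnion.2 ⟨0, by simpa using hW1⟩
      | mul a b _ _ ha hb =>
          obtain ⟨m, hm⟩ := Set.mem_iUnion.1 ha
          obtain ⟨k, hk⟩ := Set.mem_iUnion.1 hb
          refine Set.mem_iUnion.2 ⟨m + k + 1, ?_⟩
          have h1 : W ^ (m+1) * W ^ (k+1) = W ^ (m+k+1+1) := by
            rw [← pow_add]; ring_nf
          rw [← h1]
          exact Set.mul_mem_mul hm hk
      | inv a _ ha =>
          obtain ⟨m, hm⟩ := Set.mem_iUnion.1 ha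
          refine Set.mem_iUnion.2 ⟨m, ?_⟩
          have h2 : (W ^ (m+1))⁻¹ = (W⁻¹) ^ (m+1) := by
            rw [← inv_pow]
          have : a⁻¹ ∈ (W ^ (m+1))⁻¹ := by simpa using hm
          rwa [h2, hWinv] at this
    have hsup : (⋃ n : ℕ, W ^ (n+1)) ⊆ (Subgroup.closure W : Set G) := by
      intro x hx
      obtain ⟨n, hn⟩ := Set.mem_iUnion.1 hx
      clear hx
      induction n generalizing x with
      | zero => exact Subgroup.subset_closure (by simpa using hn)
      | succ k ih =>
          rw [pow_succ] at hn
          obtain ⟨a, ha, b, hb, rfl⟩ := hn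
          exact mul_mem (ih ha) (Subgroup.subset_closure hb)
    have heq : (Subgroup.closure W : Set G) = ⋃ n : ℕ, W ^ (n+1) :=
      le_antisymm hsub hsup
    rw [heq]
    exact isSigmaCompact_iUnion_of_isCompact _ hpow

lemma aux_open_subset_sigmaCompact
    {G : Type} [TopologicalSpace G] [Group G] [IsTopologicalGroup G]
    [LocallyCompactSpace G] [MeasurableSpace G] [BorelSpace G]
    (μ : Measure G) [μ.IsOpenPosMeasure] {U : Set G}
    (hU : IsOpen U) (hμU : μ U ≠ ⊤) :
    ∃ S : Set G, IsSigmaCompact S ∧ U ⊆ S := by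
  obtain ⟨H, hHo, hHsc⟩ := aux_sigma_compact_subgroup (G := G)
  set π : G → G ⧸ H := QuotientGroup.mk with hπ
  have hfiber : ∀ y : G, π ⁻¹' {π y} = y • (H : Set G) := by
    intro y
    ext x
    simp only [Set.mem_preimage, Set.mem_singleton_iff]
    constructor
    · intro h
      have : y⁻¹ * x ∈ H := QuotientGroup.eq.1 h.symm
      exact ⟨y⁻¹ * x, this, by simp [smul_eq_mul]⟩
    · rintro ⟨h₀, hh₀, rfl⟩
      exact (QuotientGroup.eq.2 (by simpa using hh₀)).symm
  have hfiber_open : ∀ q : G ⧸ H, IsOpen (π ⁻¹' {q}) := by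
    intro q
    obtain ⟨y, rfl⟩ := QuotientGroup.mk_surjective q
    rw [hfiber]
    exact hHo.smul y
  have hfiber_sc : ∀ q : G ⧸ H, IsSigmaCompact (π ⁻¹' {q}) := by
    intro q
    obtain ⟨y, rfl⟩ := QuotientGroup.mk_surjective q
    rw [hfiber, ← Set.image_smul]
    exact hHsc.image (continuous_const.mul continuous_id)
  set s : G ⧸ H → Set G := fun q => U ∩ π ⁻¹' {q} with hs
  have hsm : ∀ q, MeasurableSet (s q) :=
    fun q => (hU.inter (hfiber_open q)).measurableSet
  have hsd : Pairwise (Function.onFun Disjoint s) := by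
    intro q q' hqq'
    refine Set.disjoint_left.2 ?_
    rintro x ⟨-, hx⟩ ⟨-, hx'⟩
    simp only [Set.mem_preimage, Set.mem_singleton_iff] at hx hx'
    exact hqq' (hx ▸ hx')
  have hsU : ⋃ q, s q = U := by
    ext x
    simp [hs]
  have hcnt : {q | 0 < μ (s q)}.Countable := by
    refine Measure.countable_meas_pos_of_disjoint_of_meas_iUnion_ne_top μ hsm hsd ?_
    rw [hsU]; exact hμU
  refine ⟨⋃ q : {q // 0 < μ (s q)}, π ⁻¹' {(q : G ⧸ H)}, ?_, ?_⟩
  · have : Countable {q // 0 < μ (s q)} := hcnt.to_subtype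
    exact isSigmaCompact_iUnion _ fun q => hfiber_sc q
  · intro x hx
    have hxq : x ∈ s (π x) := ⟨hx, rfl⟩
    have hpos : 0 < μ (s (π x)) :=
      (hU.inter (hfiber_open (π x))).measure_pos μ ⟨x, hxq⟩
    exact Set.mem_iUnion.2 ⟨⟨π x, hpos⟩, rfl⟩

theorem stmt6
    {G : Type} [TopologicalSpace G] [Group G] [IsTopologicalGroup G]
    [LocallyCompactSpace G] [T2Space G] [MeasurableSpace G] [BorelSpace G]
    (μ : Measure G) [μ.IsHaarMeasure]
    {H : Type} [NormedAddCommGroup H] [InnerProductSpace ℂ H] [CompleteSpace H]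
    -- a strongly continuous unitary representation of G on H
    (γ : G → H ≃ₗᵢ[ℂ] H)
    (hγ_one : ∀ x : H, γ 1 x = x)
    (hγ_mul : ∀ s t : G, ∀ x : H, γ (s * t) x = γ s (γ t x))
    (hγ_cont : ∀ x : H, Continuous fun t => γ t x)
    -- square-integrable vectors ξ and η, with associated operators Tξ, Tη
    (ξ η : H)
    (hξ : ∀ v : H, MemLp (fun t => (inner ℂ (γ t ξ) v : ℂ)) 2 μ)
    (hη : ∀ v : H, MemLp (fun t => (inner ℂ (γ t η) v : ℂ)) 2 μ)
    (Tξ : H →L[ℂ] Lp ℂ 2 μ)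
    (hTξ : ∀ v : H, (Tξ v : G → ℂ) =ᵐ[μ] fun t => (inner ℂ (γ t ξ) v : ℂ))
    (Tη : H →L[ℂ] Lp ℂ 2 μ)
    (hTη : ∀ v : H, (Tη v : G → ℂ) =ᵐ[μ] fun t => (inner ℂ (γ t η) v : ℂ))
    -- an essentially bounded function φ and a vector ζ
    (φ : G → ℂ) (hφ : MemLp φ ⊤ μ)
    (ζ : H)
    -- g = φ·(Tη ζ), the pointwise product, as an element of L²(G,μ)
    (g : Lp ℂ 2 μ)
    (hg : (g : G → ℂ) =ᵐ[μ] fun t => φ t * (Tη ζ : G → ℂ) t) :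
    UncondIntegral μ (fun t => (φ t * (inner ℂ (γ t η) ζ : ℂ)) • γ t ξ)
      (ContinuousLinearMap.adjoint Tξ g) ∧
    ∀ K : Set G, MeasurableSet K → IsCompact (closure K) →
      ‖∫ t in K, (φ t * (inner ℂ (γ t η) ζ : ℂ)) • γ t ξ ∂μ‖ ≤
        (eLpNorm φ ⊤ μ).toReal * ‖Tξ‖ * ‖Tη‖ * ‖ζ‖ := by
  classical
  set c : G → ℂ := fun t => φ t * (inner ℂ (γ t η) ζ : ℂ) with hc
  set F : G → H := fun t => c t • γ t ξ with hFdef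
  have hγη_cont : Continuous fun t => (inner ℂ (γ t η) ζ : ℂ) :=
    Continuous.inner (hγ_cont η) continuous_const
  have hc_meas : AEStronglyMeasurable c μ :=
    hφ.aestronglyMeasurable.mul hγη_cont.aestronglyMeasurable
  have hgc : (g : G → ℂ) =ᵐ[μ] c := by
    refine hg.trans ?_
    filter_upwards [hTη ζ] with t ht
    rw [hc]; dsimp only; rw [ht]
  set Cφ : ℝ := (eLpNorm φ ⊤ μ).toReal with hCφ
  have hφ_top : eLpNorm φ ⊤ μ ≠ ⊤ := hφ.2.ne
  have hφae : ∀ᵐ t ∂μ, ‖φ t‖ ≤ Cφ := by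
    filter_upwards [ae_le_eLpNormEssSup (f := φ) (μ := μ)] with t ht
    have h2 : (‖φ t‖₊ : ℝ≥0∞) ≤ eLpNorm φ ⊤ μ := by rwa [eLpNorm_exponent_top]
    calc ‖φ t‖ = ((‖φ t‖₊ : ℝ≥0∞)).toReal := by simp
    _ ≤ Cφ := ENNReal.toReal_mono hφ_top h2
  -- integrability on relatively compact sets
  have hInt : ∀ K : Set G, MeasurableSet K → IsCompact (closure K) →
      IntegrableOn F K μ := by
    intro K hK hKc
    have hu : AEStronglyMeasurable (fun t => γ t ξ) (μ.restrict (closure K)) :=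
      (hγ_cont ξ).continuousOn.aestronglyMeasurable_of_isCompact hKc
        isClosed_closure.measurableSet
    have hu' : AEStronglyMeasurable (fun t => γ t ξ) (μ.restrict K) :=
      hu.mono_measure (Measure.restrict_mono subset_closure le_rfl)
    have hFK : AEStronglyMeasurable F (μ.restrict K) := (hc_meas.restrict).smul hu'
    refine ⟨hFK, HasFiniteIntegral.restrict_of_bounded (C := Cφ * (‖η‖ * ‖ζ‖) * ‖ξ‖)
      ((measure_mono subset_closure).trans_lt hKc.measure_lt_top) ?_⟩
    refine ae_restrict_of_ae ?_
    filter_upwards [hφae] with t ht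
    have hin : ‖(inner ℂ (γ t η) ζ : ℂ)‖ ≤ ‖η‖ * ‖ζ‖ := by
      have := norm_inner_le_norm (𝕜 := ℂ) (γ t η) ζ
      rwa [LinearIsometryEquiv.norm_map] at this
    calc ‖F t‖ = ‖φ t‖ * ‖(inner ℂ (γ t η) ζ : ℂ)‖ * ‖γ t ξ‖ := by
          rw [hFdef]; dsimp only; rw [norm_smul, hc]; dsimp only; rw [norm_mul]
    _ = ‖φ t‖ * ‖(inner ℂ (γ t η) ζ : ℂ)‖ * ‖ξ‖ := by
          rw [LinearIsometryEquiv.norm_map]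
    _ ≤ Cφ * (‖η‖ * ‖ζ‖) * ‖ξ‖ := by
          have h0 : (0:ℝ) ≤ Cφ := ENNReal.toReal_nonneg
          gcongr
  -- truncations of g in L²
  have hgK : ∀ K : Set G, MeasurableSet K → MemLp (K.indicator (g : G → ℂ)) 2 μ :=
    fun K hK => (Lp.memLp g).indicator hK
  -- the key identity
  have key : ∀ (K : Set G) (hK : MeasurableSet K), IsCompact (closure K) →
      ∫ t in K, F t ∂μ =
        (ContinuousLinearMap.adjoint Tξ) (MemLp.toLp _ (hgK K hK)) := by
    intro K hK hKc
    refine ext_inner_right ℂ fun v => ?_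
    have hIK : Integrable F (μ.restrict K) := hInt K hK hKc
    have hae : (fun t => (starRingEnd ℂ) ((MemLp.toLp _ (hgK K hK) : G → ℂ) t)
          * ((Tξ v : G → ℂ) t)) =ᵐ[μ]
        K.indicator (fun t => (starRingEnd ℂ) (c t) * (inner ℂ (γ t ξ) v : ℂ)) := by
      filter_upwards [MemLp.coeFn_toLp (hgK K hK), hTξ v, hgc] with t h1 h2 h3
      rw [h1, h2]
      by_cases htK : t ∈ K
      · rw [Set.indicator_of_mem htK, Set.indicator_of_mem htK, h3]
      · rw [Set.indicator_of_notMem htK, Set.indicator_of_notMem htK, map_zero,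
          zero_mul]
    calc inner ℂ (∫ t in K, F t ∂μ) v
        = (starRingEnd ℂ) (inner ℂ v (∫ t in K, F t ∂μ)) := (inner_conj_symm _ _).symm
      _ = (starRingEnd ℂ) (∫ t in K, (inner ℂ v (F t) : ℂ) ∂μ) := by
          rw [integral_inner hIK v]
      _ = ∫ t in K, (starRingEnd ℂ) (inner ℂ v (F t) : ℂ) ∂μ := integral_conj.symm
      _ = ∫ t in K, (starRingEnd ℂ) (c t) * (inner ℂ (γ t ξ) v : ℂ) ∂μ := by
          simp only [inner_conj_symm, hFdef, inner_smul_left]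
      _ = ∫ t, K.indicator
            (fun t => (starRingEnd ℂ) (c t) * (inner ℂ (γ t ξ) v : ℂ)) t ∂μ :=
          (integral_indicator hK).symm
      _ = ∫ t, (starRingEnd ℂ) ((MemLp.toLp _ (hgK K hK) : G → ℂ) t)
            * ((Tξ v : G → ℂ) t) ∂μ := (integral_congr_ae hae).symm
      _ = inner ℂ (MemLp.toLp _ (hgK K hK)) (Tξ v) := by
          rw [L2.inner_def]
          simp only [RCLike.inner_apply]
          exact integral_congr_ae (Filter.Eventually.of_forall fun t => mul_comm _ _)
      _ = inner ℂ ((ContinuousLinearMap.adjoint Tξ) (MemLp.toLp _ (hgK K hK))) v :=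
          (ContinuousLinearMap.adjoint_inner_left _ _ _).symm
  -- norm bound on g, hence on truncations
  have hgnorm : ‖g‖ ≤ Cφ * (‖Tη‖ * ‖ζ‖) := by
    have h1 : eLpNorm (g : G → ℂ) 2 μ ≤ eLpNorm φ ⊤ μ * eLpNorm (Tη ζ : G → ℂ) 2 μ := by
      rw [eLpNorm_congr_ae hg]
      have : (fun t => φ t * (Tη ζ : G → ℂ) t) = φ • ((Tη ζ : G → ℂ)) := by
        funext t; simp [Pi.smul_apply, smul_eq_mul]
      rw [this]
      exact eLpNorm_smul_le_eLpNorm_top_mul_eLpNorm 2 (Lp.aestronglyMeasurable _) φ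
    have h2 : ‖g‖ ≤ Cφ * ‖Tη ζ‖ := by
      rw [Lp.norm_def, Lp.norm_def, hCφ, ← ENNReal.toReal_mul]
      exact ENNReal.toReal_mono
        (ENNReal.mul_ne_top hφ_top (Lp.eLpNorm_lt_top _).ne) h1
    refine h2.trans ?_
    exact mul_le_mul_of_nonneg_left (Tη.le_opNorm ζ) ENNReal.toReal_nonneg
  have htrunc : ∀ (K : Set G) (hK : MeasurableSet K),
      ‖MemLp.toLp _ (hgK K hK)‖ ≤ Cφ * (‖Tη‖ * ‖ζ‖) := by
    intro K hK
    refine le_trans ?_ hgnorm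
    rw [Lp.norm_toLp, Lp.norm_def]
    exact ENNReal.toReal_mono (Lp.eLpNorm_lt_top _).ne (eLpNorm_indicator_le _)
  constructor
  · -- the unconditional integral
    show Filter.Tendsto _ Filter.atTop _
    have hTl : Filter.Tendsto
        (fun K : {K : Set G // MeasurableSet K ∧ IsCompact (closure K)} =>
          (MemLp.toLp _ (hgK K K.2.1) : Lp ℂ 2 μ)) Filter.atTop (𝓝 g) := by
      -- tail estimate: a compact-closure set carrying almost all of ‖g‖²
      have hexist : ∀ ε : ℝ, 0 < ε → ∃ D : Set G, MeasurableSet D ∧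
          IsCompact (closure D) ∧
          eLpNorm (Dᶜ.indicator (g : G → ℂ)) 2 μ < ENNReal.ofReal ε := by
        intro ε hε
        set h0 : G → ℂ := fun t => (inner ℂ (γ t η) ζ : ℂ) with hh0def
        have hh2 : MemLp h0 2 μ := hη ζ
        have hUopen : ∀ n : ℕ, IsOpen {t | 1/((n:ℝ)+1) < ‖h0 t‖} := fun n =>
          isOpen_lt continuous_const hγη_cont.norm
        have hUfin : ∀ n : ℕ, μ {t | 1/((n:ℝ)+1) < ‖h0 t‖} ≠ ⊤ := by
          intro n
          have hp : (0:ℝ) < 1/((n:ℝ)+1) := by positivity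
          have hne : (1/((n:ℝ)+1)).toNNReal ≠ 0 :=
            ne_of_gt (Real.toNNReal_pos.2 hp)
          have hlt := hh2.meas_ge_lt_top two_ne_zero ENNReal.ofNat_ne_top hne
          refine ((measure_mono ?_).trans_lt hlt).ne
          intro t ht
          have ht' : 1/((n:ℝ)+1) < ‖h0 t‖ := ht
          exact Real.toNNReal_le_iff_le_coe.2 (by rw [coe_nnnorm]; exact ht'.le)
        choose S hS1 hS2 using fun n : ℕ =>
          aux_open_subset_sigmaCompact μ (hUopen n) (hUfin n)
        obtain ⟨Kc, hKcpt, hKeq⟩ : IsSigmaCompact (⋃ n, S n) :=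
          isSigmaCompact_iUnion _ hS1
        set D : ℕ → Set G := fun m => ⋃ i : Fin (m+1), Kc i with hDdef
        have hDcpt : ∀ m, IsCompact (D m) := fun m =>
          isCompact_iUnion fun i => hKcpt i
        have hDmeas : ∀ m, MeasurableSet (D m) := fun m =>
          (hDcpt m).isClosed.measurableSet
        have hDS : ∀ m, D m ⊆ ⋃ n, S n := by
          intro m
          rw [← hKeq]
          exact Set.iUnion_subset fun i => Set.subset_iUnion Kc (i : ℕ)
        have hDmono : ∀ {m m' : ℕ}, m ≤ m' → D m ⊆ D m' := by
          intro m m' hmm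
          refine Set.iUnion_subset fun i => ?_
          exact Set.subset_iUnion_of_subset ⟨(i:ℕ), by omega⟩ subset_rfl
        -- g vanishes a.e. off ⋃ S n
        have hvan : ∀ᵐ t ∂μ, t ∉ (⋃ n, S n) → (g : G → ℂ) t = 0 := by
          filter_upwards [hgc] with t ht hts
          rw [ht]
          by_contra hne
          have hh0ne : h0 t ≠ 0 := by
            intro h00
            apply hne
            rw [hc]; dsimp only; rw [hh0def] at h00; dsimp only at h00
            rw [h00, mul_zero]
          have hpos : 0 < ‖h0 t‖ := norm_pos_iff.2 hh0ne
          obtain ⟨n, hn⟩ := exists_nat_one_div_lt hpos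
          exact hts (Set.mem_iUnion.2 ⟨n, hS2 n hn⟩)
        -- lintegral machinery
        set f2 : G → ℝ≥0∞ := fun t => (‖(g : G → ℂ) t‖₊ : ℝ≥0∞) ^ (2:ℝ) with hf2def
        have hf2meas : AEMeasurable f2 μ := by
          have hm1 : AEMeasurable (fun t => (‖(g : G → ℂ) t‖₊ : ℝ≥0∞) ^ (2:ℕ)) μ :=
            (Lp.aestronglyMeasurable g).aemeasurable.nnnorm.coe_nnreal_ennreal.pow_const 2
          refine hm1.congr (Filter.Eventually.of_forall fun t => ?_)
          rw [hf2def]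
          dsimp only
          rw [show ((2:ℝ)) = ((2:ℕ):ℝ) by norm_num, ENNReal.rpow_natCast]
        have hf2int : ∫⁻ t, f2 t ∂μ ≠ ⊤ := by
          have hgfin := Lp.eLpNorm_lt_top g
          rw [eLpNorm_eq_lintegral_rpow_enorm_toReal two_ne_zero ENNReal.ofNat_ne_top] at hgfin
          have h2 : (0:ℝ) < 1 / (2:ℝ≥0∞).toReal := by norm_num
          have := (ENNReal.rpow_lt_top_iff_of_pos h2).1 hgfin
          rw [hf2def]
          simpa [enorm_eq_nnnorm] using this.ne
        have hzero : ∫⁻ t, ((⋃ n, S n)ᶜ).indicator f2 t ∂μ = 0 := by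
          have hae : (fun t => ((⋃ n, S n)ᶜ).indicator f2 t) =ᵐ[μ] 0 := by
            filter_upwards [hvan] with t ht
            by_cases hts : t ∈ ⋃ n, S n
            · rw [Set.indicator_of_notMem (Set.notMem_compl_iff.2 hts)]; rfl
            · rw [Set.indicator_of_mem (Set.mem_compl hts), hf2def]
              dsimp only
              rw [ht hts]
              simp only [nnnorm_zero, ENNReal.coe_zero, Pi.zero_apply]
              exact ENNReal.zero_rpow_of_pos (by norm_num)
          rw [lintegral_congr_ae hae]
          simp
        have htendL : Filter.Tendsto
            (fun m => ∫⁻ t, ((D m)ᶜ).indicator f2 t ∂μ) Filter.atTop (𝓝 0) := by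
          have hdom := tendsto_lintegral_of_dominated_convergence' (μ := μ)
            (F := fun m => ((D m)ᶜ).indicator f2)
            (f := ((⋃ n, S n)ᶜ).indicator f2) f2
            (fun m => hf2meas.indicator (hDmeas m).compl)
            (fun m => Filter.Eventually.of_forall fun t => Set.indicator_le_self _ _ t)
            hf2int ?_
          · rwa [hzero] at hdom
          · refine Filter.Eventually.of_forall fun t => ?_
            by_cases hts : t ∈ ⋃ n, S n
            · have htk : t ∈ ⋃ n, Kc n := by rwa [hKeq]
              obtain ⟨n0, hn0⟩ := Set.mem_iUnion.1 htk
              rw [Set.indicator_of_notMem (Set.notMem_compl_iff.2 hts)]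
              refine tendsto_const_nhds.congr' ?_
              refine Filter.eventually_atTop.2 ⟨n0, fun m hm => ?_⟩
              have htD : t ∈ D m := Set.mem_iUnion.2 ⟨⟨n0, by omega⟩, hn0⟩
              exact (Set.indicator_of_notMem (Set.notMem_compl_iff.2 htD) f2).symm
            · have hnot : ∀ m, t ∉ D m := fun m hmem => hts (hDS m hmem)
              rw [Set.indicator_of_mem (Set.mem_compl hts)]
              refine tendsto_const_nhds.congr fun m => ?_
              exact (Set.indicator_of_mem (Set.mem_compl (hnot m)) f2).symm
        have hth : (0:ℝ≥0∞) < (ENNReal.ofReal ε) ^ (2:ℝ) :=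
          ENNReal.rpow_pos (ENNReal.ofReal_pos.2 hε) ENNReal.ofReal_ne_top
        obtain ⟨m, hm⟩ := (htendL.eventually (gt_mem_nhds hth)).exists
        refine ⟨D m, hDmeas m, ?_, ?_⟩
        · rw [(hDcpt m).isClosed.closure_eq]; exact hDcpt m
        · rw [eLpNorm_eq_lintegral_rpow_enorm_toReal two_ne_zero ENNReal.ofNat_ne_top]
          have heq : ∀ t, (‖(((D m)ᶜ).indicator ((g : G → ℂ)) t)‖₊ : ℝ≥0∞)
              ^ ((2:ℝ≥0∞).toReal) = ((D m)ᶜ).indicator f2 t := by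
            intro t
            by_cases ht : t ∈ (D m)ᶜ
            · rw [Set.indicator_of_mem ht, Set.indicator_of_mem ht, hf2def]
              norm_num
            · rw [Set.indicator_of_notMem ht, Set.indicator_of_notMem ht]
              simp only [nnnorm_zero, ENNReal.coe_zero]
              exact ENNReal.zero_rpow_of_pos (by norm_num)
          simp only [enorm_eq_nnnorm]
          rw [lintegral_congr heq]
          calc (∫⁻ t, ((D m)ᶜ).indicator f2 t ∂μ) ^ (1 / (2:ℝ≥0∞).toReal)
              < ((ENNReal.ofReal ε) ^ (2:ℝ)) ^ (1 / (2:ℝ≥0∞).toReal) :=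
                ENNReal.rpow_lt_rpow hm (by norm_num)
            _ = ENNReal.ofReal ε := by
                rw [← ENNReal.rpow_mul]
                norm_num
      -- now the net convergence
      rw [Metric.tendsto_nhds]
      intro ε hε
      obtain ⟨D, hDmeas, hDclos, hDsmall⟩ := hexist ε hε
      filter_upwards [Filter.Ici_mem_atTop
        (⟨D, hDmeas, hDclos⟩ : {K : Set G // MeasurableSet K ∧ IsCompact (closure K)})]
        with K hKD
      have hDK : D ⊆ (K : Set G) := hKD
      have h1 : eLpNorm ((MemLp.toLp _ (hgK K K.2.1) : G → ℂ) - (g : G → ℂ)) 2 μ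
          = eLpNorm (((K : Set G)ᶜ).indicator (g : G → ℂ)) 2 μ := by
        have hae : ((MemLp.toLp _ (hgK K K.2.1) : G → ℂ) - (g : G → ℂ)) =ᵐ[μ]
            fun t => -((((K : Set G)ᶜ).indicator (g : G → ℂ)) t) := by
          filter_upwards [MemLp.coeFn_toLp (hgK K K.2.1)] with t ht
          rw [Pi.sub_apply, ht]
          by_cases htK : t ∈ (K : Set G)
          · rw [Set.indicator_of_mem htK, Set.indicator_of_notMem (by simpa using htK),
              sub_self, neg_zero]
          · rw [Set.indicator_of_notMem htK, Set.indicator_of_mem (by simpa using htK),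
              zero_sub]
        rw [eLpNorm_congr_ae hae]
        exact eLpNorm_neg _ _ _
      have h2 : eLpNorm (((K : Set G)ᶜ).indicator (g : G → ℂ)) 2 μ
          ≤ eLpNorm (Dᶜ.indicator (g : G → ℂ)) 2 μ := by
        refine eLpNorm_mono fun t => ?_
        by_cases htK : t ∈ (K : Set G)
        · rw [Set.indicator_of_notMem (by simpa using htK)]
          simp only [norm_zero, norm_nonneg]
        · rw [Set.indicator_of_mem (by simpa using htK),
            Set.indicator_of_mem (by simpa using fun h => htK (hDK h))]
      rw [Lp.dist_def]
      have h3 : eLpNorm ((MemLp.toLp _ (hgK K K.2.1) : G → ℂ) - (g : G → ℂ)) 2 μ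
          < ENNReal.ofReal ε := lt_of_le_of_lt (h1 ▸ h2) hDsmall
      exact (ENNReal.lt_ofReal_iff_toReal_lt h3.ne_top).1 h3
    have hcomp := ((ContinuousLinearMap.adjoint Tξ).continuous.tendsto g).comp hTl
    refine hcomp.congr fun K => ?_
    exact (key K K.2.1 K.2.2).symm
  · intro K hK hKc
    rw [key K hK hKc]
    calc ‖(ContinuousLinearMap.adjoint Tξ) (MemLp.toLp _ (hgK K hK))‖
        ≤ ‖ContinuousLinearMap.adjoint Tξ‖ * ‖MemLp.toLp _ (hgK K hK)‖ :=
          ContinuousLinearMap.le_opNorm _ _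
      _ = ‖Tξ‖ * ‖MemLp.toLp _ (hgK K hK)‖ := by
          rw [LinearIsometryEquiv.norm_map]
      _ ≤ ‖Tξ‖ * (Cφ * (‖Tη‖ * ‖ζ‖)) :=
          mul_le_mul_of_nonneg_left (htrunc K hK) (norm_nonneg _)
      _ = Cφ * ‖Tξ‖ * ‖Tη‖ * ‖ζ‖ := by ring
end

section
/- Assume G is Abelian with Pontryagin dual Ĝ, and for χ ∈ Ĝ let M_χ be the unitary operator on L²(G,μ) given by (M_χ f)(t) = conj(⟨χ,t⟩)·f(t). Let ξ, η ∈ H be square-integrable and set X := T_ξ* ∘ M_χ ∘ T_η, a bounded operator on H. Then for every square-integrable ζ ∈ H the vector X(ζ) is again square-integrable, and T_{X(ζ)} = M_χ ∘ T_ζ ∘ X*. -/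
open MeasureTheory Filter Topology

theorem stmt7
    {G : Type} [TopologicalSpace G] [CommGroup G] [IsTopologicalGroup G]
    [LocallyCompactSpace G] [T2Space G] [MeasurableSpace G] [BorelSpace G]
    (μ : Measure G) [μ.IsHaarMeasure]
    {H : Type} [NormedAddCommGroup H] [InnerProductSpace ℂ H] [CompleteSpace H]
    -- a strongly continuous unitary representation of G on H
    (γ : G → H ≃ₗᵢ[ℂ] H)
    (hγ_one : ∀ x : H, γ 1 x = x)
    (hγ_mul : ∀ s t : G, ∀ x : H, γ (s * t) x = γ s (γ t x))
    (hγ_cont : ∀ x : H, Continuous fun t => γ t x)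
    -- the unitary M_χ of pointwise multiplication by conj ∘ χ on L²(G,μ)
    (χ : PontryaginDual G)
    (Mχ : Lp ℂ 2 μ →L[ℂ] Lp ℂ 2 μ)
    (hMχ : ∀ f : Lp ℂ 2 μ,
      (Mχ f : G → ℂ) =ᵐ[μ] fun t => (starRingEnd ℂ) (χ t : ℂ) * (f : G → ℂ) t)
    -- square-integrable vectors ξ, η, ζ with associated operators Tξ, Tη, Tζ
    (ξ η ζ : H)
    (hξ : ∀ v : H, MemLp (fun t => (inner ℂ (γ t ξ) v : ℂ)) 2 μ)
    (hη : ∀ v : H, MemLp (fun t => (inner ℂ (γ t η) v : ℂ)) 2 μ)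
    (hζ : ∀ v : H, MemLp (fun t => (inner ℂ (γ t ζ) v : ℂ)) 2 μ)
    (Tξ : H →L[ℂ] Lp ℂ 2 μ)
    (hTξ : ∀ v : H, (Tξ v : G → ℂ) =ᵐ[μ] fun t => (inner ℂ (γ t ξ) v : ℂ))
    (Tη : H →L[ℂ] Lp ℂ 2 μ)
    (hTη : ∀ v : H, (Tη v : G → ℂ) =ᵐ[μ] fun t => (inner ℂ (γ t η) v : ℂ))
    (Tζ : H →L[ℂ] Lp ℂ 2 μ)
    (hTζ : ∀ v : H, (Tζ v : G → ℂ) =ᵐ[μ] fun t => (inner ℂ (γ t ζ) v : ℂ)) :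
    let X : H →L[ℂ] H := (ContinuousLinearMap.adjoint Tξ).comp (Mχ.comp Tη)
    -- X(ζ) is square-integrable
    (∀ v : H, MemLp (fun t => (inner ℂ (γ t (X ζ)) v : ℂ)) 2 μ) ∧
    -- T_{X(ζ)} = M_χ ∘ T_ζ ∘ X*
    (∀ v : H,
      ((Mχ.comp (Tζ.comp (ContinuousLinearMap.adjoint X))) v : G → ℂ)
        =ᵐ[μ] fun t => (inner ℂ (γ t (X ζ)) v : ℂ)) := by
  intro X
  -- unitarity: move γ s across the inner product
  have hunit : ∀ (s : G) (x v : H), (inner ℂ (γ s x) v : ℂ) = inner ℂ x (γ s⁻¹ v) := by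
    intro s x v
    have hv : γ s (γ s⁻¹ v) = v := by
      rw [← hγ_mul, mul_inv_cancel, hγ_one]
    conv_lhs => rw [← hv]
    exact (γ s).inner_map_map x (γ s⁻¹ v)
  -- formula for ⟪X w, v⟫ as an integral
  have hA : ∀ (w v : H), (inner ℂ (X w) v : ℂ)
      = ∫ t, (χ t : ℂ) * (starRingEnd ℂ) (inner ℂ (γ t η) w : ℂ)
          * (inner ℂ (γ t ξ) v : ℂ) ∂μ := by
    intro w v
    have h1 : (inner ℂ (X w) v : ℂ) = inner ℂ (Mχ (Tη w)) (Tξ v) := by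
      simp only [X, ContinuousLinearMap.comp_apply]
      exact ContinuousLinearMap.adjoint_inner_left Tξ _ _
    rw [h1, MeasureTheory.L2.inner_def]
    refine integral_congr_ae ?_
    filter_upwards [hMχ (Tη w), hTη w, hTξ v] with t h1 h2 h3
    simp only [RCLike.inner_apply, h1, h2, h3, map_mul, Complex.conj_conj]
    exact mul_comm _ _
  -- covariance identity
  have hkey : ∀ (s : G) (v : H),
      (inner ℂ (X (γ s ζ)) v : ℂ) = (χ s : ℂ) * inner ℂ (γ s (X ζ)) v := by
    intro s v
    rw [hA, hunit s (X ζ) v, hA, ← integral_const_mul,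
      ← MeasureTheory.integral_mul_left_eq_self
        (fun t => (χ t : ℂ) * (starRingEnd ℂ) (inner ℂ (γ t η) (γ s ζ) : ℂ)
          * (inner ℂ (γ t ξ) v : ℂ)) s]
    refine integral_congr_ae (Eventually.of_forall fun t => ?_)
    have e1 : ((χ (s * t) : ℂ)) = (χ s : ℂ) * (χ t : ℂ) := by
      rw [map_mul]; norm_cast
    have e2 : (inner ℂ (γ (s * t) η) (γ s ζ) : ℂ) = inner ℂ (γ t η) ζ := by
      rw [hγ_mul]; exact (γ s).inner_map_map (γ t η) ζ
    have e3 : (inner ℂ (γ (s * t) ξ) v : ℂ) = inner ℂ (γ t ξ) (γ s⁻¹ v) := by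
      rw [hγ_mul]; exact hunit s (γ t ξ) v
    simp only [e1, e2, e3]; ring
  -- the a.e. identity
  have hmain : ∀ v : H,
      ((Mχ.comp (Tζ.comp (ContinuousLinearMap.adjoint X))) v : G → ℂ)
        =ᵐ[μ] fun t => (inner ℂ (γ t (X ζ)) v : ℂ) := by
    intro v
    have := hMχ (Tζ (ContinuousLinearMap.adjoint X v))
    filter_upwards [hMχ (Tζ (ContinuousLinearMap.adjoint X v)),
      hTζ (ContinuousLinearMap.adjoint X v)] with t h1 h2
    simp only [ContinuousLinearMap.comp_apply]
    rw [h1, h2, ContinuousLinearMap.adjoint_inner_right, hkey t v, ← mul_assoc,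
      mul_comm ((starRingEnd ℂ) (χ t : ℂ)) ((χ t : ℂ)), Complex.mul_conj,
      Circle.normSq_coe, Complex.ofReal_one, one_mul]
  exact ⟨fun v => (Lp.memLp _).ae_eq (hmain v), hmain⟩
end

section
/- For every ξ ∈ L²(Ĝ,ν) and every continuous compactly supported function f : G → ℂ, the Bochner integral ∫_G f(t)·(γ_t ξ) dμ(t), computed in L²(Ĝ,ν), equals (as an element of L²(Ĝ,ν), i.e. almost everywhere) the function ω ↦ f̂(ω)·ξ(ω), where f̂(ω) := ∫_G f(t)·conj(⟨ω,t⟩) dμ(t). -/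
open MeasureTheory Filter Topology
open scoped ENNReal NNReal

theorem stmt10
    {G : Type} [TopologicalSpace G] [CommGroup G] [IsTopologicalGroup G]
    [LocallyCompactSpace G] [T2Space G] [SecondCountableTopology G]
    [MeasurableSpace G] [BorelSpace G]
    (μ : Measure G) [μ.IsHaarMeasure]
    [MeasurableSpace (PontryaginDual G)] [BorelSpace (PontryaginDual G)]
    (ν : Measure (PontryaginDual G)) [ν.IsHaarMeasure]
    -- the representation γ of G on L²(Ĝ,ν): (γ_t ξ)(ω) = conj⟨ω,t⟩·ξ(ω)
    (γ : G → (Lp ℂ 2 ν →L[ℂ] Lp ℂ 2 ν))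
    (hγ : ∀ (t : G) (ξ : Lp ℂ 2 ν),
      (γ t ξ : PontryaginDual G → ℂ) =ᵐ[ν]
        fun ω => (starRingEnd ℂ) (ω t : ℂ) * (ξ : PontryaginDual G → ℂ) ω) :
    ∀ (ξ : Lp ℂ 2 ν) (f : G → ℂ), Continuous f → HasCompactSupport f →
      ((∫ t, f t • γ t ξ ∂μ : Lp ℂ 2 ν) : PontryaginDual G → ℂ) =ᵐ[ν]
        fun ω => (∫ t, f t * (starRingEnd ℂ) (ω t : ℂ) ∂μ) *
          (ξ : PontryaginDual G → ℂ) ω := by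
  intro ξ f hf hsupp
  haveI : SecondCountableTopology (PontryaginDual G) :=
    (ContinuousMonoidHom.isInducing_toContinuousMap G Circle).secondCountableTopology
  -- continuity of evaluation maps
  have hev2 : Continuous fun p : PontryaginDual G × G => ((p.1 p.2 : Circle) : ℂ) := by
    have : Continuous fun p : ContinuousMonoidHom G Circle × G => ((p.1 p.2 : Circle) : ℂ) :=
      continuous_subtype_val.comp (continuous_fst.eval continuous_snd)
    exact this
  have hevConst : ∀ t : G, Continuous fun ω : PontryaginDual G => ((ω t : Circle) : ℂ) := by
    intro t
    have : Continuous fun ω : ContinuousMonoidHom G Circle => ((ω t : Circle) : ℂ) :=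
      continuous_subtype_val.comp (continuous_eval_const t)
    exact this
  have hevω : ∀ ω : PontryaginDual G, Continuous fun t : G => ((ω t : Circle) : ℂ) :=
    fun ω => continuous_subtype_val.comp (map_continuous ω)
  have hnorm : ∀ (ω : PontryaginDual G) (t : G), ‖((ω t : Circle) : ℂ)‖ = 1 := fun ω t => by
    exact Circle.norm_coe _
  -- the multiplication function
  have hmul_meas : ∀ t : G, AEStronglyMeasurable
      (fun ω : PontryaginDual G => (starRingEnd ℂ) (ω t : ℂ) * (ξ : PontryaginDual G → ℂ) ω) ν :=
    fun t => ((Complex.continuous_conj.comp (hevConst t)).aestronglyMeasurable.mul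
      (Lp.aestronglyMeasurable ξ))
  have hmul_mem : ∀ t : G, MemLp
      (fun ω : PontryaginDual G => (starRingEnd ℂ) (ω t : ℂ) * (ξ : PontryaginDual G → ℂ) ω) 2 ν := by
    intro t
    refine MemLp.of_le_mul (c := 1) (Lp.memLp ξ) (hmul_meas t)
      (Eventually.of_forall fun ω => ?_)
    simp [norm_mul, RCLike.norm_conj, hnorm ω t]
  set Φ : G → Lp ℂ 2 ν := fun t => (hmul_mem t).toLp _ with hΦdef
  have hΦcoe : ∀ t, (Φ t : PontryaginDual G → ℂ) =ᵐ[ν]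
      fun ω => (starRingEnd ℂ) (ω t : ℂ) * (ξ : PontryaginDual G → ℂ) ω :=
    fun t => (hmul_mem t).coeFn_toLp
  have hγΦ : ∀ t, γ t ξ = Φ t := fun t => Lp.ext ((hγ t ξ).trans (hΦcoe t).symm)
  -- continuity of Φ
  have hpow2 : ∀ x : ℝ≥0∞, x ^ (2:ℝ) = x ^ (2:ℕ) := fun x => by
    rw [← ENNReal.rpow_natCast]; norm_num
  have hΦcont : Continuous Φ := by
    rw [continuous_iff_continuousAt]
    intro t₀
    rw [ContinuousAt, Lp.tendsto_Lp_iff_tendsto_eLpNorm']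
    have hdiff : ∀ s : G, eLpNorm ((Φ s : PontryaginDual G → ℂ) - (Φ t₀ : PontryaginDual G → ℂ)) 2 ν
        = (∫⁻ ω, (‖((starRingEnd ℂ) (ω s : ℂ) - (starRingEnd ℂ) (ω t₀ : ℂ))
            * (ξ : PontryaginDual G → ℂ) ω‖₊ : ℝ≥0∞) ^ (2:ℕ) ∂ν) ^ (1/2 : ℝ) := by
      intro s
      have : eLpNorm ((Φ s : PontryaginDual G → ℂ) - (Φ t₀ : PontryaginDual G → ℂ)) 2 ν
          = eLpNorm (fun ω => ((starRingEnd ℂ) (ω s : ℂ) - (starRingEnd ℂ) (ω t₀ : ℂ))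
              * (ξ : PontryaginDual G → ℂ) ω) 2 ν := by
        refine eLpNorm_congr_ae ?_
        filter_upwards [hΦcoe s, hΦcoe t₀] with ω h1 h2
        simp only [Pi.sub_apply, h1, h2, sub_mul]
      rw [this, eLpNorm_eq_lintegral_rpow_enorm_toReal two_ne_zero ENNReal.ofNat_ne_top]
      simp_rw [ENNReal.toReal_ofNat, hpow2, enorm_eq_nnnorm]
    simp_rw [hdiff]
    have hξ2 : ∫⁻ ω, (‖(ξ : PontryaginDual G → ℂ) ω‖₊ : ℝ≥0∞) ^ (2:ℕ) ∂ν ≠ ∞ := by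
      have h := (Lp.memLp ξ).2
      rw [eLpNorm_eq_lintegral_rpow_enorm_toReal two_ne_zero ENNReal.ofNat_ne_top] at h
      simp_rw [ENNReal.toReal_ofNat, hpow2, enorm_eq_nnnorm] at h
      intro hcontra
      rw [hcontra] at h
      simp [ENNReal.top_rpow_of_pos (by norm_num : (0:ℝ) < 1/2)] at h
    have hlim : Tendsto (fun s => ∫⁻ ω, (‖((starRingEnd ℂ) (ω s : ℂ) - (starRingEnd ℂ) (ω t₀ : ℂ))
        * (ξ : PontryaginDual G → ℂ) ω‖₊ : ℝ≥0∞) ^ (2:ℕ) ∂ν) (𝓝 t₀) (𝓝 0) := by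
      have h0 : (0:ℝ≥0∞) = ∫⁻ (_ : PontryaginDual G), (0:ℝ≥0∞) ∂ν := by simp
      rw [h0]
      refine tendsto_lintegral_filter_of_dominated_convergence
        (fun ω => (4:ℝ≥0∞) * (‖(ξ : PontryaginDual G → ℂ) ω‖₊ : ℝ≥0∞) ^ (2:ℕ)) ?_ ?_ ?_ ?_
      · refine Eventually.of_forall fun s => ?_
        have hm : Measurable fun ω : PontryaginDual G =>
            ((starRingEnd ℂ) (ω s : ℂ) - (starRingEnd ℂ) (ω t₀ : ℂ))
              * (ξ : PontryaginDual G → ℂ) ω :=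
          (((Complex.continuous_conj.comp (hevConst s)).sub
            (Complex.continuous_conj.comp (hevConst t₀))).measurable).mul
            (Lp.stronglyMeasurable ξ).measurable
        exact hm.enorm.pow_const 2
      · refine Eventually.of_forall fun s => Eventually.of_forall fun ω => ?_
        have hr : ‖((starRingEnd ℂ) (ω s : ℂ) - (starRingEnd ℂ) (ω t₀ : ℂ))
            * (ξ : PontryaginDual G → ℂ) ω‖ ≤ 2 * ‖(ξ : PontryaginDual G → ℂ) ω‖ := by
          rw [norm_mul]
          refine mul_le_mul_of_nonneg_right ?_ (norm_nonneg _)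
          calc ‖(starRingEnd ℂ) (ω s : ℂ) - (starRingEnd ℂ) (ω t₀ : ℂ)‖
              ≤ ‖(starRingEnd ℂ) (ω s : ℂ)‖ + ‖(starRingEnd ℂ) (ω t₀ : ℂ)‖ := norm_sub_le _ _
            _ = 2 := by rw [RCLike.norm_conj, RCLike.norm_conj, hnorm ω s, hnorm ω t₀]; norm_num
        have hnn : (‖((starRingEnd ℂ) (ω s : ℂ) - (starRingEnd ℂ) (ω t₀ : ℂ))
            * (ξ : PontryaginDual G → ℂ) ω‖₊ : ℝ≥0∞)
            ≤ 2 * (‖(ξ : PontryaginDual G → ℂ) ω‖₊ : ℝ≥0∞) := by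
          have : (‖((starRingEnd ℂ) (ω s : ℂ) - (starRingEnd ℂ) (ω t₀ : ℂ))
              * (ξ : PontryaginDual G → ℂ) ω‖₊ : ℝ≥0)
              ≤ 2 * ‖(ξ : PontryaginDual G → ℂ) ω‖₊ := by
            rw [← NNReal.coe_le_coe]
            push_cast
            exact hr
          exact_mod_cast this
        calc (‖((starRingEnd ℂ) (ω s : ℂ) - (starRingEnd ℂ) (ω t₀ : ℂ))
            * (ξ : PontryaginDual G → ℂ) ω‖₊ : ℝ≥0∞) ^ (2:ℕ)
            ≤ (2 * (‖(ξ : PontryaginDual G → ℂ) ω‖₊ : ℝ≥0∞)) ^ (2:ℕ) :=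
              pow_le_pow_left₀ (by positivity) hnn 2
          _ = 4 * (‖(ξ : PontryaginDual G → ℂ) ω‖₊ : ℝ≥0∞) ^ (2:ℕ) := by
              rw [mul_pow]; norm_num
      · rw [lintegral_const_mul' _ _ (by norm_num)]
        exact ENNReal.mul_ne_top (by norm_num) hξ2
      · refine Eventually.of_forall fun ω => ?_
        have hc2 : Continuous fun s : G =>
            (‖((starRingEnd ℂ) (ω s : ℂ) - (starRingEnd ℂ) (ω t₀ : ℂ))
              * (ξ : PontryaginDual G → ℂ) ω‖₊ : ℝ≥0∞) ^ (2:ℕ) := by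
          have hbase : Continuous fun s : G =>
              ‖((starRingEnd ℂ) (ω s : ℂ) - (starRingEnd ℂ) (ω t₀ : ℂ))
                * (ξ : PontryaginDual G → ℂ) ω‖₊ :=
            Continuous.nnnorm
              (((Complex.continuous_conj.comp (hevω ω)).sub continuous_const).mul continuous_const)
          have : Continuous fun s : G =>
              ((‖((starRingEnd ℂ) (ω s : ℂ) - (starRingEnd ℂ) (ω t₀ : ℂ))
                * (ξ : PontryaginDual G → ℂ) ω‖₊ ^ (2:ℕ) : ℝ≥0) : ℝ≥0∞) :=
            ENNReal.continuous_coe.comp (hbase.pow 2)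
          simpa [ENNReal.coe_pow] using this
        have := hc2.tendsto t₀
        simpa using this
    have := (ENNReal.continuous_rpow_const (y := 1/2)).tendsto (0:ℝ≥0∞)
    have h := this.comp hlim
    simpa [Function.comp_def, ENNReal.zero_rpow_of_pos (by norm_num : (0:ℝ) < 1/2)] using h
  -- integrability of the Lp-valued integrand
  have hH_int : Integrable (fun t => f t • Φ t) μ :=
    (hf.smul hΦcont).integrable_of_hasCompactSupport hsupp.smul_right
  have hf_int : Integrable f μ := hf.integrable_of_hasCompactSupport hsupp
  -- the Fourier-type transform
  have hfhat_sm : StronglyMeasurable fun ω : PontryaginDual G =>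
      ∫ t, f t * (starRingEnd ℂ) (ω t : ℂ) ∂μ := by
    refine MeasureTheory.StronglyMeasurable.integral_prod_right
      (f := fun (ω : PontryaginDual G) (t : G) => f t * (starRingEnd ℂ) (ω t : ℂ)) ?_
    exact ((hf.comp continuous_snd).mul (Complex.continuous_conj.comp hev2)).stronglyMeasurable
  have hC : ∀ ω : PontryaginDual G,
      ‖∫ t, f t * (starRingEnd ℂ) (ω t : ℂ) ∂μ‖ ≤ ∫ t, ‖f t‖ ∂μ := by
    intro ω
    calc ‖∫ t, f t * (starRingEnd ℂ) (ω t : ℂ) ∂μ‖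
        ≤ ∫ t, ‖f t * (starRingEnd ℂ) (ω t : ℂ)‖ ∂μ := norm_integral_le_integral_norm _
      _ = ∫ t, ‖f t‖ ∂μ := by
          refine integral_congr_ae (Eventually.of_forall fun t => ?_)
          simp [RCLike.norm_conj, hnorm ω t]
  have hg_mem : MemLp (fun ω => (∫ t, f t * (starRingEnd ℂ) (ω t : ℂ) ∂μ)
      * (ξ : PontryaginDual G → ℂ) ω) 2 ν := by
    refine MemLp.of_le_mul (c := ∫ t, ‖f t‖ ∂μ) (Lp.memLp ξ)
      (hfhat_sm.aestronglyMeasurable.mul (Lp.aestronglyMeasurable ξ))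
      (Eventually.of_forall fun ω => ?_)
    rw [norm_mul]
    exact mul_le_mul_of_nonneg_right (hC ω) (norm_nonneg _)
  -- key identity via inner products
  have hkey : (∫ t, f t • γ t ξ ∂μ) = hg_mem.toLp _ := by
    simp only [hγΦ]
    refine ext_inner_left ℂ fun η => ?_
    have hη := Lp.aestronglyMeasurable η
    set ψ : G → PontryaginDual G → ℂ := fun t ω =>
      (f t * (starRingEnd ℂ) (ω t : ℂ))
        * ((starRingEnd ℂ) ((η : PontryaginDual G → ℂ) ω) * (ξ : PontryaginDual G → ℂ) ω)
      with hψdef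
    have hψ_int : Integrable (Function.uncurry ψ) (μ.prod ν) := by
      have hA : Continuous fun p : G × PontryaginDual G =>
          f p.1 * (starRingEnd ℂ) ((p.2 p.1 : Circle) : ℂ) :=
        (hf.comp continuous_fst).mul
          (Complex.continuous_conj.comp (hev2.comp (continuous_snd.prodMk continuous_fst)))
      have hB0 : AEStronglyMeasurable (fun ω : PontryaginDual G =>
          (starRingEnd ℂ) ((η : PontryaginDual G → ℂ) ω) * (ξ : PontryaginDual G → ℂ) ω) ν :=
        (Complex.continuous_conj.comp_aestronglyMeasurable hη).mul (Lp.aestronglyMeasurable ξ)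
      have hB : AEStronglyMeasurable (fun p : G × PontryaginDual G =>
          (starRingEnd ℂ) ((η : PontryaginDual G → ℂ) p.2) * (ξ : PontryaginDual G → ℂ) p.2)
          (μ.prod ν) :=
        hB0.comp_quasiMeasurePreserving Measure.quasiMeasurePreserving_snd
      have hAESM : AEStronglyMeasurable (Function.uncurry ψ) (μ.prod ν) :=
        hA.aestronglyMeasurable.mul hB
      have hηξ : Integrable (fun ω : PontryaginDual G =>
          ‖(starRingEnd ℂ) ((η : PontryaginDual G → ℂ) ω) * (ξ : PontryaginDual G → ℂ) ω‖) ν := by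
        have := (L2.integrable_inner (𝕜 := ℂ) η ξ).norm
        simpa [RCLike.inner_apply, mul_comm] using this
      have hbound : Integrable (fun p : G × PontryaginDual G =>
          ‖f p.1‖ * ‖(starRingEnd ℂ) ((η : PontryaginDual G → ℂ) p.2)
            * (ξ : PontryaginDual G → ℂ) p.2‖) (μ.prod ν) :=
        hf_int.norm.mul_prod hηξ
      refine hbound.mono' hAESM (Eventually.of_forall fun p => ?_)
      simp only [Function.uncurry, hψdef]
      rw [norm_mul, norm_mul, RCLike.norm_conj, hnorm p.2 p.1, mul_one]
    rw [← integral_inner hH_int η]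
    have hL : ∀ t : G, (inner ℂ η (f t • Φ t) : ℂ) = ∫ ω, ψ t ω ∂ν := by
      intro t
      rw [inner_smul_right, L2.inner_def, ← integral_const_mul]
      refine integral_congr_ae ?_
      filter_upwards [hΦcoe t] with ω hω
      rw [RCLike.inner_apply, hω]
      simp only [hψdef]
      ring
    have hR : (inner ℂ η (hg_mem.toLp _) : ℂ) = ∫ ω, ∫ t, ψ t ω ∂μ ∂ν := by
      rw [L2.inner_def]
      refine integral_congr_ae ?_
      filter_upwards [hg_mem.coeFn_toLp] with ω hω
      rw [RCLike.inner_apply, hω]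
      have : (∫ t, ψ t ω ∂μ) = (∫ t, f t * (starRingEnd ℂ) (ω t : ℂ) ∂μ)
          * ((starRingEnd ℂ) ((η : PontryaginDual G → ℂ) ω) * (ξ : PontryaginDual G → ℂ) ω) :=
        integral_mul_const _ _
      rw [this]
      ring
    rw [hR]
    simp_rw [hL]
    exact integral_integral_swap hψ_int
  rw [hkey]
  exact hg_mem.coeFn_toLp
end

section
/- For every h ∈ C_c(X) the function E₁(h) is well defined (for each x ∈ X the integrand t ↦ h(t⁻¹·x) is continuous with compact support), bounded, continuous, and G-invariant, and the induced function Ẽ₁(h) on the orbit space X/G belongs to C₀(X/G). Moreover, the set {Ẽ₁(h) : h ∈ C_c(X)} is a linear subspace of C₀(X/G) that is closed under multiplication by arbitrary elements of C₀(X/G) (i.e. it is an ideal), and it is dense in C₀(X/G) with respect to the supremum norm. -/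
open MeasureTheory Filter Topology Set
set_option linter.unusedSectionVars false

section Aux

variable {G : Type} [TopologicalSpace G] [Group G] [IsTopologicalGroup G]
    [LocallyCompactSpace G] [T2Space G] [MeasurableSpace G] [BorelSpace G]
    {X : Type} [TopologicalSpace X] [T2Space X] [LocallyCompactSpace X]
    [MulAction G X] [ContinuousSMul G X] [ProperSMul G X]

lemma auxCpct (K V : Set X) (hK : IsCompact K) (hV : IsCompact V) :
    IsCompact {t : G | ∃ x ∈ V, t⁻¹ • x ∈ K} := by
  have hP : IsCompact ((fun gx : G × X => (gx.1 • gx.2, gx.2)) ⁻¹' (K ×ˢ V)) :=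
    ProperSMul.isProperMap_smul_pair.isCompact_preimage (hK.prod hV)
  have himg : IsCompact ((fun p : G × X => p.1⁻¹) ''
      ((fun gx : G × X => (gx.1 • gx.2, gx.2)) ⁻¹' (K ×ˢ V))) :=
    hP.image (continuous_fst.inv)
  convert himg using 1
  ext t
  constructor
  · rintro ⟨x, hxV, hxK⟩
    exact ⟨(t⁻¹, x), ⟨hxK, hxV⟩, by simp⟩
  · rintro ⟨⟨s, x⟩, ⟨hsK, hxV⟩, rfl⟩
    exact ⟨x, hxV, by simpa using hsK⟩

lemma auxCpct1 (K : Set X) (hK : IsCompact K) (x : X) :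
    IsCompact {t : G | t⁻¹ • x ∈ K} := by
  have := auxCpct (G := G) K {x} hK isCompact_singleton
  convert this using 1
  ext t; simp

variable (μ : Measure G) [μ.IsHaarMeasure]
variable {E : Type} [NormedAddCommGroup E] [NormedSpace ℝ E]
  [SecondCountableTopology E]

lemma auxPt (h : X → E) (hc : Continuous h) (hcs : HasCompactSupport h) (x : X) :
    Continuous (fun t : G => h (t⁻¹ • x)) ∧
      HasCompactSupport (fun t : G => h (t⁻¹ • x)) := by
  refine ⟨hc.comp ((continuous_inv).smul continuous_const), ?_⟩
  apply HasCompactSupport.intro (auxCpct1 (G := G) (tsupport h) hcs x)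
  intro t ht
  exact image_eq_zero_of_notMem_tsupport ht

lemma auxInt (h : X → E) (hc : Continuous h) (hcs : HasCompactSupport h) (x : X) :
    Integrable (fun t : G => h (t⁻¹ • x)) μ :=
  (auxPt h hc hcs x).1.integrable_of_hasCompactSupport (auxPt h hc hcs x).2

lemma auxContinuous (h : X → E) (hc : Continuous h) (hcs : HasCompactSupport h) :
    Continuous (fun x : X => ∫ t, h (t⁻¹ • x) ∂μ) := by
  rw [continuous_iff_continuousAt]
  intro x₀
  obtain ⟨V, hVc, hVn⟩ := exists_compact_mem_nhds x₀
  set L : Set G := {t : G | ∃ x ∈ V, t⁻¹ • x ∈ tsupport h} with hLdef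
  have hLc : IsCompact L := auxCpct (G := G) _ V hcs hVc
  haveI : CompactSpace ↥L := isCompact_iff_compactSpace.mp hLc
  set cm : C(X × ↥L, E) :=
    ⟨fun p => h ((p.2 : G)⁻¹ • p.1), by fun_prop⟩ with hcm
  set Φ : C(X, C(↥L, E)) := cm.curry with hΦ
  have hd : Continuous (fun x : X => ‖Φ x - Φ x₀‖) :=
    ((Φ.continuous.sub continuous_const).norm)
  have key : ∀ x ∈ V, ‖(∫ t, h (t⁻¹ • x) ∂μ) - ∫ t, h (t⁻¹ • x₀) ∂μ‖ ≤
      ‖Φ x - Φ x₀‖ * (μ L).toReal := by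
    intro x hx
    have hx₀ : x₀ ∈ V := mem_of_mem_nhds hVn
    rw [← integral_sub (auxInt μ h hc hcs x) (auxInt μ h hc hcs x₀)]
    have hzero : ∀ t : G, t ∉ L → h (t⁻¹ • x) - h (t⁻¹ • x₀) = 0 := by
      intro t ht
      have h1 : t⁻¹ • x ∉ tsupport h := fun hm => ht ⟨x, hx, hm⟩
      have h2 : t⁻¹ • x₀ ∉ tsupport h := fun hm => ht ⟨x₀, hx₀, hm⟩
      rw [image_eq_zero_of_notMem_tsupport h1, image_eq_zero_of_notMem_tsupport h2,
        sub_zero]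
    rw [← setIntegral_eq_integral_of_forall_compl_eq_zero hzero]
    apply norm_setIntegral_le_of_norm_le_const hLc.measure_lt_top
    intro t ht
    have : h (t⁻¹ • x) - h (t⁻¹ • x₀) = (Φ x - Φ x₀) ⟨t, ht⟩ := by
      simp [hΦ, hcm, ContinuousMap.curry]
    rw [this]
    exact (Φ x - Φ x₀).norm_coe_le_norm _
  have hnorm0 : Tendsto (fun x : X => ‖Φ x - Φ x₀‖ * (μ L).toReal) (𝓝 x₀) (𝓝 0) := by
    have := (hd.tendsto x₀).mul_const ((μ L).toReal)
    simpa using this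
  rw [ContinuousAt, tendsto_iff_norm_sub_tendsto_zero]
  apply squeeze_zero' (Eventually.of_forall fun x => norm_nonneg _)
    (by filter_upwards [hVn] with x hx using key x hx) hnorm0

lemma auxInv (h : X → E) (t : G) (x : X) :
    (∫ s, h (s⁻¹ • t • x) ∂μ) = ∫ s, h (s⁻¹ • x) ∂μ := by
  have : ∀ s : G, h (s⁻¹ • t • x) = (fun u : G => h (u⁻¹ • x)) (t⁻¹ * s) := by
    intro s; simp [smul_smul, mul_inv_rev]
  simp_rw [this]
  exact MeasureTheory.integral_mul_left_eq_self (fun u : G => h (u⁻¹ • x)) t⁻¹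

lemma auxMkSmul (t : G) (x : X) :
    Quotient.mk (MulAction.orbitRel G X) (t • x) = Quotient.mk (MulAction.orbitRel G X) x :=
  Quotient.sound (MulAction.mem_orbit x t)

lemma auxRespects (h : X → E) (a b : X) (hab : (MulAction.orbitRel G X) a b) :
    (∫ t, h (t⁻¹ • a) ∂μ) = ∫ t, h (t⁻¹ • b) ∂μ := by
  rw [MulAction.orbitRel_apply] at hab
  obtain ⟨t, rfl⟩ := hab
  exact auxInv μ h t b

lemma auxLift (h : X → E) (hc : Continuous h) (hcs : HasCompactSupport h) :
    ∃ q : Quotient (MulAction.orbitRel G X) → E,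
      (∀ x : X, q (Quotient.mk (MulAction.orbitRel G X) x) = ∫ t, h (t⁻¹ • x) ∂μ) ∧
      Continuous q ∧ HasCompactSupport q := by
  haveI : T2Space (Quotient (MulAction.orbitRel G X)) :=
    t2Space_quotient_mulAction_of_properSMul
  refine ⟨Quotient.lift (fun x => ∫ t, h (t⁻¹ • x) ∂μ)
    (fun a b hab => auxRespects μ h a b hab), fun x => rfl, ?_, ?_⟩
  · exact (auxContinuous μ h hc hcs).quotient_lift _
  · have himg : IsCompact ((Quotient.mk (MulAction.orbitRel G X)) '' tsupport h) :=
      hcs.isCompact.image continuous_quot_mk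
    apply HasCompactSupport.intro' himg himg.isClosed
    intro y hy
    obtain ⟨x, rfl⟩ := Quotient.exists_rep y
    show (∫ t, h (t⁻¹ • x) ∂μ) = 0
    by_contra hne
    apply hy
    have : ∃ t : G, h (t⁻¹ • x) ≠ 0 := by
      by_contra hall
      push_neg at hall
      exact hne (by simp [hall])
    obtain ⟨t, ht⟩ := this
    exact ⟨t⁻¹ • x, subset_tsupport h ht, auxMkSmul t⁻¹ x⟩

lemma auxCompactLift (C : Set (Quotient (MulAction.orbitRel G X))) (hC : IsCompact C) :
    ∃ K : Set X, IsCompact K ∧ C ⊆ Quotient.mk (MulAction.orbitRel G X) '' K := by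
  have hN : ∀ x : X, ∃ N : Set X, IsCompact N ∧ N ∈ 𝓝 x := fun x => exists_compact_mem_nhds x
  choose N hNc hNn using hN
  have hopen : ∀ x : X, IsOpen (Quotient.mk (MulAction.orbitRel G X) '' interior (N x)) :=
    fun x => (MulAction.isOpenQuotientMap_quotientMk).isOpenMap _ isOpen_interior
  have hcover : C ⊆ ⋃ x : X, Quotient.mk (MulAction.orbitRel G X) '' interior (N x) := by
    intro y _
    obtain ⟨x, rfl⟩ := Quotient.exists_rep y
    exact Set.mem_iUnion.2 ⟨x, ⟨x, mem_interior_iff_mem_nhds.2 (hNn x), rfl⟩⟩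
  obtain ⟨s, hs⟩ := hC.elim_finite_subcover _ hopen hcover
  refine ⟨⋃ x ∈ s, N x, s.finite_toSet.isCompact_biUnion (fun x _ => hNc x), ?_⟩
  intro y hy
  obtain ⟨x, hxs, z, hz, rfl⟩ := Set.mem_iUnion₂.1 (hs hy)
  exact ⟨z, Set.mem_biUnion hxs (interior_subset hz), rfl⟩

lemma auxPos (g : X → ℝ) (hgc : Continuous g) (hgcs : HasCompactSupport g)
    (hg0 : 0 ≤ g) (x : X) (s : G) (hs : 0 < g (s⁻¹ • x)) :
    0 < ∫ t, g (t⁻¹ • x) ∂μ := by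
  rw [integral_pos_iff_support_of_nonneg (f := fun t : G => g (t⁻¹ • x)) (fun t => hg0 _) (auxInt μ g hgc hgcs x)]
  have hO : IsOpen {t : G | 0 < g (t⁻¹ • x)} :=
    isOpen_lt continuous_const (hgc.comp (continuous_inv.smul continuous_const))
  have hsub : {t : G | 0 < g (t⁻¹ • x)} ⊆ Function.support fun t => g (t⁻¹ • x) :=
    fun t ht => ne_of_gt ht
  exact lt_of_lt_of_le (hO.measure_pos μ ⟨s, hs⟩) (measure_mono hsub)

end Aux


theorem stmt14
    {G : Type} [TopologicalSpace G] [Group G] [IsTopologicalGroup G]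
    [LocallyCompactSpace G] [T2Space G] [MeasurableSpace G] [BorelSpace G]
    (μ : Measure G) [μ.IsHaarMeasure]
    {X : Type} [TopologicalSpace X] [T2Space X] [LocallyCompactSpace X]
    [MulAction G X] [ContinuousSMul G X] [ProperSMul G X] :
    -- the set of induced functions Ẽ₁(h) on the orbit space X/G
    let S : Set (Quotient (MulAction.orbitRel G X) → ℂ) :=
      {q | Continuous q ∧
        Filter.Tendsto q (Filter.cocompact (Quotient (MulAction.orbitRel G X))) (𝓝 0) ∧
        ∃ h : X → ℂ, Continuous h ∧ HasCompactSupport h ∧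
          ∀ x : X, q (Quotient.mk (MulAction.orbitRel G X) x) = ∫ t, h (t⁻¹ • x) ∂μ}
    -- well-definedness, boundedness, continuity, invariance, and membership in C₀(X/G)
    (∀ h : X → ℂ, Continuous h → HasCompactSupport h →
      (∀ x : X, Continuous (fun t : G => h (t⁻¹ • x)) ∧
          HasCompactSupport (fun t : G => h (t⁻¹ • x))) ∧
      (∃ C : ℝ, ∀ x : X, ‖∫ t, h (t⁻¹ • x) ∂μ‖ ≤ C) ∧
      (Continuous fun x : X => ∫ t, h (t⁻¹ • x) ∂μ) ∧
      (∀ (t : G) (x : X), (∫ s, h (s⁻¹ • t • x) ∂μ) = ∫ s, h (s⁻¹ • x) ∂μ) ∧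
      (∃ q : Quotient (MulAction.orbitRel G X) → ℂ,
        (∀ x : X, q (Quotient.mk (MulAction.orbitRel G X) x) = ∫ t, h (t⁻¹ • x) ∂μ) ∧
        Continuous q ∧
        Filter.Tendsto q (Filter.cocompact (Quotient (MulAction.orbitRel G X))) (𝓝 0))) ∧
    -- S is a linear subspace of C₀(X/G)
    (∀ q₁ ∈ S, ∀ q₂ ∈ S, q₁ + q₂ ∈ S) ∧
    (∀ c : ℂ, ∀ q ∈ S, c • q ∈ S) ∧
    -- S is closed under multiplication by arbitrary elements of C₀(X/G)
    (∀ q ∈ S, ∀ r : Quotient (MulAction.orbitRel G X) → ℂ, Continuous r →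
      Filter.Tendsto r (Filter.cocompact (Quotient (MulAction.orbitRel G X))) (𝓝 0) →
      r * q ∈ S) ∧
    -- S is dense in C₀(X/G) for the supremum norm
    (∀ r : Quotient (MulAction.orbitRel G X) → ℂ, Continuous r →
      Filter.Tendsto r (Filter.cocompact (Quotient (MulAction.orbitRel G X))) (𝓝 0) →
      ∀ ε > (0 : ℝ), ∃ q ∈ S, ∀ y, ‖r y - q y‖ ≤ ε) := by
  intro S
  refine ⟨?_, ?_, ?_, ?_, ?_⟩
  · -- first part
    intro h hc hcs
    obtain ⟨q, hqv, hqc, hqcs⟩ := auxLift μ h hc hcs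
    refine ⟨fun x => auxPt h hc hcs x, ?_, auxContinuous μ h hc hcs,
      fun t x => auxInv μ h t x, ⟨q, hqv, hqc, hqcs.is_zero_at_infty⟩⟩
    obtain ⟨C, hC⟩ := hqcs.exists_bound_of_continuous hqc
    exact ⟨C, fun x => by rw [← hqv x]; exact hC _⟩
  · -- addition
    rintro q₁ ⟨hc₁, ht₁, h₁, hh₁c, hh₁s, hv₁⟩ q₂ ⟨hc₂, ht₂, h₂, hh₂c, hh₂s, hv₂⟩
    refine ⟨hc₁.add hc₂, by simpa [Pi.add_def] using ht₁.add ht₂, h₁ + h₂, hh₁c.add hh₂c,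
      hh₁s.add hh₂s, fun x => ?_⟩
    have : (∫ t, (h₁ + h₂) (t⁻¹ • x) ∂μ)
        = (∫ t, h₁ (t⁻¹ • x) ∂μ) + ∫ t, h₂ (t⁻¹ • x) ∂μ := by
      simp only [Pi.add_apply]
      exact integral_add (auxInt μ h₁ hh₁c hh₁s x) (auxInt μ h₂ hh₂c hh₂s x)
    show q₁ _ + q₂ _ = _
    rw [hv₁ x, hv₂ x]
    exact this.symm
  · -- smul
    rintro c q ⟨hc, ht, h, hhc, hhs, hv⟩
    have hcsmul : HasCompactSupport (c • h) :=
      HasCompactSupport.intro hhs.isCompact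
        (fun x hx => by simp [image_eq_zero_of_notMem_tsupport hx])
    refine ⟨hc.const_smul c, by simpa [Pi.smul_def] using ht.const_smul c, c • h,
      hhc.const_smul c, hcsmul, fun x => ?_⟩
    simp only [Pi.smul_apply, hv x]
    rw [← integral_smul]
  · -- ideal
    rintro q ⟨hc, ht, h, hhc, hhs, hv⟩ r hrc hrt
    have hcmul : HasCompactSupport
        (fun x : X => r (Quotient.mk (MulAction.orbitRel G X) x) * h x) :=
      HasCompactSupport.intro hhs.isCompact
        (fun x hx => by simp [image_eq_zero_of_notMem_tsupport hx])
    refine ⟨hrc.mul hc, by simpa [Pi.mul_def] using hrt.mul ht,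
      fun x => r (Quotient.mk (MulAction.orbitRel G X) x) * h x,
      (hrc.comp continuous_quot_mk).mul hhc, hcmul, fun x => ?_⟩
    show r _ * q _ = _
    rw [hv x, ← integral_const_mul]
    congr 1
    funext t
    simp only [auxMkSmul]
  · -- density
    intro r hrc hrt ε hε
    have hball : Metric.closedBall (0 : ℂ) ε ∈ 𝓝 (0 : ℂ) := Metric.closedBall_mem_nhds 0 hε
    have hmem := hrt hball
    rw [mem_map, mem_cocompact] at hmem
    obtain ⟨C, hCc, hCsub⟩ := hmem
    have hout : ∀ y ∉ C, ‖r y‖ ≤ ε := fun y hy => by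
      have := hCsub hy
      simpa [Metric.mem_closedBall, dist_zero_right] using this
    rcases C.eq_empty_or_nonempty with rfl | hCne
    · refine ⟨0, ⟨continuous_const, tendsto_const_nhds, 0, continuous_const,
        HasCompactSupport.intro isCompact_empty (fun x _ => rfl), fun x => by simp⟩,
        fun y => by simpa using hout y (by simp)⟩
    obtain ⟨K, hKc, hKsub⟩ := auxCompactLift C hCc
    obtain ⟨g, hg1, -, hgcs, hgmem⟩ :=
      exists_continuous_one_zero_of_isCompact hKc isClosed_empty (by simp)
    set Eg : X → ℝ := fun x => ∫ t, g (t⁻¹ • x) ∂μ with hEgdef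
    have hEgc : Continuous Eg := auxContinuous μ g g.continuous hgcs
    have hEg0 : ∀ x, 0 ≤ Eg x := fun x => integral_nonneg (fun t => (hgmem _).1)
    have hEgpos : ∀ x : X, Quotient.mk (MulAction.orbitRel G X) x ∈ C → 0 < Eg x := by
      intro x hx
      obtain ⟨k, hkK, hk⟩ := hKsub hx
      have hrel : k ∈ MulAction.orbit G x := Quotient.exact hk
      obtain ⟨s, hs⟩ := MulAction.mem_orbit_iff.mp hrel
      refine auxPos μ g g.continuous hgcs (fun y => (hgmem y).1) x s⁻¹ ?_
      rw [inv_inv, hs, hg1 hkK]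
      norm_num
    obtain ⟨qg, hqgv, hqgc, hqgcs⟩ := auxLift μ (g : X → ℝ) g.continuous hgcs
    obtain ⟨y₀, hy₀C, hy₀min⟩ := hCc.exists_isMinOn hCne hqgc.continuousOn
    rw [isMinOn_iff] at hy₀min
    set δ : ℝ := qg y₀ with hδdef
    have hδpos : 0 < δ := by
      obtain ⟨x₀, rfl⟩ := Quotient.exists_rep y₀
      rw [hδdef, hqgv]
      exact hEgpos x₀ hy₀C
    have hWpos : ∀ x : X, 0 < max δ (Eg x) := fun x => lt_max_of_lt_left hδpos
    set h : X → ℂ := fun x => r (Quotient.mk (MulAction.orbitRel G X) x) *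
      Complex.ofReal (g x / max δ (Eg x)) with hhdef
    have hhc : Continuous h :=
      (hrc.comp continuous_quot_mk).mul (Complex.continuous_ofReal.comp
        (g.continuous.div (continuous_const.max hEgc) (fun x => ne_of_gt (hWpos x))))
    have hhcs : HasCompactSupport h :=
      HasCompactSupport.intro hgcs.isCompact
        (fun x hx => by simp [hhdef, image_eq_zero_of_notMem_tsupport hx])
    have hval : ∀ x : X, (∫ t, h (t⁻¹ • x) ∂μ)
        = r (Quotient.mk (MulAction.orbitRel G X) x) *
          Complex.ofReal (Eg x / max δ (Eg x)) := by
      intro x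
      have h1 : ∀ t : G, h (t⁻¹ • x) =
          (r (Quotient.mk (MulAction.orbitRel G X) x) / Complex.ofReal (max δ (Eg x))) *
            Complex.ofReal (g (t⁻¹ • x)) := by
        intro t
        have e1 : Quotient.mk (MulAction.orbitRel G X) (t⁻¹ • x)
            = Quotient.mk (MulAction.orbitRel G X) x := auxMkSmul t⁻¹ x
        have e2 : Eg (t⁻¹ • x) = Eg x := auxInv μ _ t⁻¹ x
        rw [hhdef]
        simp only [e1, e2]
        push_cast
        ring
      simp_rw [h1]
      rw [integral_const_mul]
      have hcoe : (∫ t : G, (Complex.ofReal (g (t⁻¹ • x)) : ℂ) ∂μ)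
          = Complex.ofReal (Eg x) := by
        have := Complex.ofRealCLM.integral_comp_comm
          (auxInt μ (g : X → ℝ) g.continuous hgcs x)
        simpa [hEgdef] using this
      rw [hcoe, Complex.ofReal_div]
      ring
    obtain ⟨q, hqv, hqc, hqcs⟩ := auxLift μ h hhc hhcs
    refine ⟨q, ⟨hqc, hqcs.is_zero_at_infty, h, hhc, hhcs, hqv⟩, ?_⟩
    intro y
    obtain ⟨x, rfl⟩ := Quotient.exists_rep y
    rw [hqv, hval]
    by_cases hyC : Quotient.mk (MulAction.orbitRel G X) x ∈ C
    · have hge : δ ≤ Eg x := by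
        have := hy₀min _ hyC
        rwa [hqgv] at this
      rw [max_eq_right hge, div_self (ne_of_gt (lt_of_lt_of_le hδpos hge))]
      simpa using le_of_lt hε
    · have h1 : ‖r (Quotient.mk (MulAction.orbitRel G X) x)‖ ≤ ε := hout _ hyC
      set ρ : ℝ := Eg x / max δ (Eg x) with hρdef
      have hρ0 : 0 ≤ ρ := div_nonneg (hEg0 x) (le_of_lt (hWpos x))
      have hρ1 : ρ ≤ 1 := (div_le_one (hWpos x)).2 (le_max_right _ _)
      have : r (Quotient.mk (MulAction.orbitRel G X) x) -
          r (Quotient.mk (MulAction.orbitRel G X) x) * Complex.ofReal ρ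
          = r (Quotient.mk (MulAction.orbitRel G X) x) * Complex.ofReal (1 - ρ) := by
        push_cast; ring
      rw [this, norm_mul]
      have h2 : ‖(Complex.ofReal (1 - ρ))‖ ≤ 1 := by
        rw [Complex.norm_real]
        rw [Real.norm_eq_abs, abs_of_nonneg (by linarith)]
        linarith
      calc ‖r (Quotient.mk (MulAction.orbitRel G X) x)‖ * ‖(Complex.ofReal (1 - ρ))‖
          ≤ ε * 1 := mul_le_mul h1 h2 (norm_nonneg _) (le_of_lt hε)
        _ = ε := mul_one ε
end

section
/- Assume additionally that G is Abelian with Pontryagin dual Ĝ, and let ω ∈ Ĝ. Let b : X → ℂ be a bounded continuous function satisfying b(t⁻¹·x) = ⟨ω,t⟩·b(x) for all t ∈ G and x ∈ X, and such that the induced function G·x ↦ |b(x)| on the orbit space X/G belongs to C₀(X/G). Then: (1) for every h ∈ C_c(X) and every x ∈ X, ∫_G conj(⟨ω,t⟩)·h(t⁻¹·x)·b(t⁻¹·x) dμ(t) = E₁(h)(x)·b(x); and (2) for every ε > 0 there exists h ∈ C_c(X) such that sup_{x∈X} |E₁(h)(x)·b(x) − b(x)| ≤ ε. -/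
open MeasureTheory Filter Topology

section aux

variable {G : Type} [TopologicalSpace G] [CommGroup G] [IsTopologicalGroup G]
    [LocallyCompactSpace G] [T2Space G] [MeasurableSpace G] [BorelSpace G]
    {X : Type} [TopologicalSpace X] [T2Space X] [LocallyCompactSpace X]
    [MulAction G X] [ContinuousSMul G X]

/-- The "transporter" set of elements moving some point of `S` into `L` is compact
for a proper action. -/
lemma aux_transporter_compact [ProperSMul G X] {L S : Set X}
    (hL : IsCompact L) (hS : IsCompact S) :
    IsCompact {t : G | ∃ x ∈ S, t • x ∈ L} := by
  have hp : IsProperMap (fun gx : G × X => (gx.1 • gx.2, gx.2)) :=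
    ProperSMul.isProperMap_smul_pair
  have hc : IsCompact ((fun gx : G × X => (gx.1 • gx.2, gx.2)) ⁻¹' (L ×ˢ S)) :=
    hp.isCompact_preimage (hL.prod hS)
  have himg : IsCompact (Prod.fst '' ((fun gx : G × X => (gx.1 • gx.2, gx.2)) ⁻¹' (L ×ˢ S))) :=
    hc.image continuous_fst
  convert himg using 1
  ext t
  constructor
  · rintro ⟨x, hxS, hxL⟩
    exact ⟨(t, x), by simpa using ⟨hxL, hxS⟩, rfl⟩
  · rintro ⟨⟨t', x⟩, hmem, rfl⟩
    simp only [Set.mem_preimage, Set.mem_prod] at hmem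
    exact ⟨x, hmem.2, hmem.1⟩

/-- For `g` continuous with compact support, `t ↦ g (t⁻¹ • x)` has compact support. -/
lemma aux_cs_orbit [ProperSMul G X] {g : X → ℝ} (hgs : HasCompactSupport g) (x : X) :
    HasCompactSupport (fun t : G => g (t⁻¹ • x)) := by
  have hT : IsCompact {t : G | ∃ y ∈ tsupport g, t • y ∈ ({x} : Set X)} :=
    aux_transporter_compact isCompact_singleton hgs
  apply HasCompactSupport.of_support_subset_isCompact hT
  intro t ht
  have h1 : t⁻¹ • x ∈ tsupport g := subset_tsupport _ ht
  exact ⟨t⁻¹ • x, h1, by simp⟩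

lemma aux_integrable [ProperSMul G X] (μ : Measure G) [μ.IsHaarMeasure]
    {g : X → ℝ} (hg : Continuous g) (hgs : HasCompactSupport g) (x : X) :
    Integrable (fun t : G => g (t⁻¹ • x)) μ := by
  have hc : Continuous (fun t : G => g (t⁻¹ • x)) :=
    hg.comp (continuous_inv.smul continuous_const)
  exact hc.integrable_of_hasCompactSupport (aux_cs_orbit hgs x)

/-- Continuity of `x ↦ ∫ t, g (t⁻¹ • x)`. -/
lemma aux_continuous_E1 [ProperSMul G X] (μ : Measure G) [μ.IsHaarMeasure]
    {g : X → ℝ} (hg : Continuous g) (hgs : HasCompactSupport g) :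
    Continuous (fun x : X => ∫ t, g (t⁻¹ • x) ∂μ) := by
  rw [continuous_iff_continuousAt]
  intro x₀
  obtain ⟨V, hVc, hV⟩ := exists_compact_mem_nhds x₀
  have hx₀V : x₀ ∈ V := mem_of_mem_nhds hV
  set T : Set G := {t : G | ∃ y ∈ tsupport g, t • y ∈ V} with hTdef
  have hTc : IsCompact T := aux_transporter_compact hVc hgs
  have hzero : ∀ x ∈ V, ∀ t ∉ T, g (t⁻¹ • x) = 0 := by
    intro x hx t ht
    by_contra h0
    exact ht ⟨t⁻¹ • x, subset_tsupport _ h0, by simpa using hx⟩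
  have hφ : Continuous (fun p : G × X => g (p.1⁻¹ • p.2)) :=
    hg.comp ((continuous_fst.inv).smul continuous_snd)
  rw [ContinuousAt, Metric.tendsto_nhds]
  intro ε hε
  set C : ℝ := (μ T).toReal + 1 with hCdef
  have hC : 0 < C := by positivity
  set ε' : ℝ := ε / (2 * C) with hε'def
  have hε' : 0 < ε' := by positivity
  have key : ∀ t : G, ∃ (U : Set G) (W : Set X), IsOpen U ∧ IsOpen W ∧ t ∈ U ∧ x₀ ∈ W ∧
      ∀ p : G × X, p ∈ U ×ˢ W → |g (p.1⁻¹ • p.2) - g (t⁻¹ • x₀)| < ε' / 2 := by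
    intro t
    have hO : IsOpen {p : G × X | |g (p.1⁻¹ • p.2) - g (t⁻¹ • x₀)| < ε' / 2} := by
      have hcont : Continuous fun p : G × X => |g (p.1⁻¹ • p.2) - g (t⁻¹ • x₀)| :=
        (hφ.sub continuous_const).abs
      exact isOpen_lt hcont continuous_const
    have hmem : (t, x₀) ∈ {p : G × X | |g (p.1⁻¹ • p.2) - g (t⁻¹ • x₀)| < ε' / 2} := by
      simp only [Set.mem_setOf_eq, sub_self, abs_zero]
      positivity
    rcases isOpen_prod_iff.1 hO t x₀ hmem with ⟨U, W, hU, hW, htU, hx₀W, hUW⟩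
    exact ⟨U, W, hU, hW, htU, hx₀W, fun p hp => hUW hp⟩
  choose U W hUopen hWopen htU hx₀W hUW using key
  obtain ⟨s, hsT, hsfin, hscov⟩ := hTc.elim_finite_subcover_image
    (fun t (_ : t ∈ T) => hUopen t) (fun t ht => Set.mem_biUnion ht (htU t))
  have hWmem : (V ∩ ⋂ t ∈ s, W t) ∈ 𝓝 x₀ :=
    Filter.inter_mem hV ((Filter.biInter_mem hsfin).2 fun t _ => (hWopen t).mem_nhds (hx₀W t))
  filter_upwards [hWmem] with x hx
  obtain ⟨hxV, hxW⟩ := hx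
  have hbnd : ∀ t : G, ‖g (t⁻¹ • x) - g (t⁻¹ • x₀)‖ ≤ T.indicator (fun _ => ε') t := by
    intro t
    by_cases htT : t ∈ T
    · obtain ⟨t', ht's, htU'⟩ := Set.mem_iUnion₂.1 (hscov htT)
      have hxW' : x ∈ W t' := Set.mem_iInter₂.1 hxW t' ht's
      have h1 := hUW t' (t, x) ⟨htU', hxW'⟩
      have h2 := hUW t' (t, x₀) ⟨htU', hx₀W t'⟩
      rw [Set.indicator_of_mem htT]
      have habs : |g (t⁻¹ • x) - g (t⁻¹ • x₀)| < ε' := by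
        calc |g (t⁻¹ • x) - g (t⁻¹ • x₀)|
            ≤ |g (t⁻¹ • x) - g (t'⁻¹ • x₀)| + |g (t'⁻¹ • x₀) - g (t⁻¹ • x₀)| :=
              abs_sub_le _ _ _
          _ < ε' / 2 + ε' / 2 := by
              apply add_lt_add h1
              rw [abs_sub_comm]
              exact h2
          _ = ε' := by ring
      simpa [Real.norm_eq_abs] using habs.le
    · rw [hzero x hxV t htT, hzero x₀ hx₀V t htT]
      simpa using Set.indicator_nonneg (fun _ _ => hε'.le) t
  have hbound_int : Integrable (T.indicator fun _ => ε') μ := by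
    rw [integrable_indicator_iff hTc.isClosed.measurableSet]
    exact integrableOn_const hTc.measure_lt_top.ne
  rw [Real.dist_eq]
  have hFsub : (∫ t, g (t⁻¹ • x) ∂μ) - (∫ t, g (t⁻¹ • x₀) ∂μ)
      = ∫ t, (g (t⁻¹ • x) - g (t⁻¹ • x₀)) ∂μ :=
    (integral_sub (aux_integrable μ hg hgs x) (aux_integrable μ hg hgs x₀)).symm
  have hle : |(∫ t, g (t⁻¹ • x) ∂μ) - ∫ t, g (t⁻¹ • x₀) ∂μ|
      ≤ ∫ t, T.indicator (fun _ => ε') t ∂μ := by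
    rw [hFsub, ← Real.norm_eq_abs]
    exact norm_integral_le_of_norm_le hbound_int (Filter.Eventually.of_forall hbnd)
  have hval : (∫ t, T.indicator (fun _ => ε') t ∂μ) = (μ T).toReal * ε' := by
    rw [integral_indicator_const _ hTc.isClosed.measurableSet, smul_eq_mul]; rfl
  have hμT : (μ T).toReal ≤ C := by
    rw [hCdef]; linarith
  have hfinal : (μ T).toReal * ε' ≤ ε / 2 := by
    have : C * ε' = ε / 2 := by
      rw [hε'def]; field_simp
    calc (μ T).toReal * ε' ≤ C * ε' := mul_le_mul_of_nonneg_right hμT hε'.le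
      _ = ε / 2 := this
  calc |(∫ t, g (t⁻¹ • x) ∂μ) - ∫ t, g (t⁻¹ • x₀) ∂μ|
      ≤ (μ T).toReal * ε' := hval ▸ hle
    _ ≤ ε / 2 := hfinal
    _ < ε := by linarith

/-- Invariance of `E₁ g` under the action. -/
lemma aux_invariant_E1 (μ : Measure G) [μ.IsHaarMeasure]
    (g : X → ℝ) (s : G) (x : X) :
    (∫ t, g (t⁻¹ • (s • x)) ∂μ) = ∫ t, g (t⁻¹ • x) ∂μ := by
  have : ∀ t : G, g (t⁻¹ • (s • x)) = (fun u : G => g (u⁻¹ • x)) (s⁻¹ * t) := by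
    intro t
    simp only
    congr 1
    rw [smul_smul, mul_inv_rev, inv_inv, mul_comm]
  simp_rw [this]
  exact integral_mul_left_eq_self (fun u : G => g (u⁻¹ • x)) s⁻¹

/-- Positivity of `E₁ g` at points where `g` is positive. -/
lemma aux_pos_E1 [ProperSMul G X] (μ : Measure G) [μ.IsHaarMeasure]
    {g : X → ℝ} (hg : Continuous g) (hgs : HasCompactSupport g)
    (hg0 : ∀ y, 0 ≤ g y) {x : X} (hx : 0 < g x) :
    0 < ∫ t, g (t⁻¹ • x) ∂μ := by
  rw [integral_pos_iff_support_of_nonneg (fun t => hg0 _) (aux_integrable μ hg hgs x)]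
  have hopen : IsOpen (Function.support fun t : G => g (t⁻¹ • x)) := by
    have : Continuous (fun t : G => g (t⁻¹ • x)) :=
      hg.comp (continuous_inv.smul continuous_const)
    exact this.isOpen_support
  exact hopen.measure_pos μ ⟨1, by simpa using ne_of_gt hx⟩

/-- Lifting compact sets along the orbit quotient map. -/
lemma aux_compact_lift {Q : Set (Quotient (MulAction.orbitRel G X))} (hQ : IsCompact Q) :
    ∃ K : Set X, IsCompact K ∧ Q ⊆ (Quotient.mk (MulAction.orbitRel G X)) '' K := by
  classical
  set π : X → Quotient (MulAction.orbitRel G X) := Quotient.mk (MulAction.orbitRel G X)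
  have hπ : IsOpenQuotientMap π := MulAction.isOpenQuotientMap_quotientMk
  have hN : ∀ q : Quotient (MulAction.orbitRel G X),
      ∃ N : Set X, IsCompact N ∧ N ∈ 𝓝 (Quotient.out q) := fun q =>
    let ⟨N, h1, h2⟩ := exists_compact_mem_nhds (Quotient.out q); ⟨N, h1, h2⟩
  choose N hNc hNn using hN
  have hcover : Q ⊆ ⋃ q ∈ Q, π '' interior (N q) := by
    intro q hq
    refine Set.mem_biUnion hq ?_
    refine ⟨Quotient.out q, mem_interior_iff_mem_nhds.2 (hNn q), ?_⟩
    exact Quotient.out_eq q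
  obtain ⟨s, hs⟩ := hQ.elim_finite_subcover_image
    (fun q (_ : q ∈ Q) => hπ.isOpenMap _ isOpen_interior) hcover
  obtain ⟨hsQ, hsfin, hscov⟩ := hs
  refine ⟨⋃ q ∈ s, N q, ?_, ?_⟩
  · exact hsfin.isCompact_biUnion (fun q _ => hNc q)
  · intro q hq
    obtain ⟨q', hq's, hmem⟩ := Set.mem_iUnion₂.1 (hscov hq)
    obtain ⟨x, hx, hxq⟩ := hmem
    exact ⟨x, Set.mem_biUnion hq's (interior_subset hx), hxq⟩

end aux

theorem stmt15
    {G : Type} [TopologicalSpace G] [CommGroup G] [IsTopologicalGroup G]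
    [LocallyCompactSpace G] [T2Space G] [MeasurableSpace G] [BorelSpace G]
    (μ : Measure G) [μ.IsHaarMeasure]
    {X : Type} [TopologicalSpace X] [T2Space X] [LocallyCompactSpace X]
    [MulAction G X] [ContinuousSMul G X] [ProperSMul G X]
    (ω : PontryaginDual G)
    (b : X → ℂ) (hb_cont : Continuous b) (hb_bdd : ∃ C : ℝ, ∀ x, ‖b x‖ ≤ C)
    (hb_eq : ∀ (t : G) (x : X), b (t⁻¹ • x) = (ω t : ℂ) * b x)
    -- |b| induces an element of C₀(X/G)
    (hb_C0 : ∃ β : Quotient (MulAction.orbitRel G X) → ℝ,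
      (∀ x : X, β (Quotient.mk (MulAction.orbitRel G X) x) = ‖b x‖) ∧
      Continuous β ∧
      Filter.Tendsto β (Filter.cocompact (Quotient (MulAction.orbitRel G X))) (𝓝 0)) :
    -- (1)
    (∀ h : X → ℂ, Continuous h → HasCompactSupport h → ∀ x : X,
      (∫ t, (starRingEnd ℂ) (ω t : ℂ) * h (t⁻¹ • x) * b (t⁻¹ • x) ∂μ)
        = (∫ t, h (t⁻¹ • x) ∂μ) * b x) ∧
    -- (2)
    (∀ ε > (0 : ℝ), ∃ h : X → ℂ, Continuous h ∧ HasCompactSupport h ∧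
      ∀ x : X, ‖(∫ t, h (t⁻¹ • x) ∂μ) * b x - b x‖ ≤ ε) := by
  constructor
  · -- Part (1)
    intro h _ _ x
    have key : ∀ t : G,
        (starRingEnd ℂ) (ω t : ℂ) * h (t⁻¹ • x) * b (t⁻¹ • x) = h (t⁻¹ • x) * b x := by
      intro t
      rw [hb_eq t x, ← Circle.coe_inv_eq_conj]
      have h1 : ((ω t)⁻¹ : Circle) * ((ω t : Circle) : ℂ) = 1 := by
        norm_cast
        simp
      calc (((ω t)⁻¹ : Circle) : ℂ) * h (t⁻¹ • x) * ((ω t : Circle) * b x)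
          = (((ω t)⁻¹ : Circle) * (ω t : Circle)) * (h (t⁻¹ • x) * b x) := by ring
        _ = h (t⁻¹ • x) * b x := by rw [h1, one_mul]
    simp_rw [key]
    exact integral_mul_const (b x) _
  · -- Part (2)
    intro ε hε
    obtain ⟨β, hβval, _hβcont, hβ0⟩ := hb_C0
    set π : X → Quotient (MulAction.orbitRel G X) := Quotient.mk (MulAction.orbitRel G X)
    -- eventual smallness of β
    have hsmall : ∀ᶠ q in cocompact (Quotient (MulAction.orbitRel G X)), |β q| < ε := by
      have := hβ0 (Metric.ball_mem_nhds (0 : ℝ) hε)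
      filter_upwards [this] with q hq
      simpa [Real.dist_eq] using hq
    obtain ⟨Q, hQc, hQ⟩ := (hasBasis_cocompact.eventually_iff).1 hsmall
    obtain ⟨K, hKc, hKQ⟩ := aux_compact_lift (G := G) hQc
    rcases K.eq_empty_or_nonempty with hKe | hKne
    · -- K empty: Q empty, b is uniformly small; take h = 0
      refine ⟨0, continuous_const, HasCompactSupport.zero, fun x => ?_⟩
      have hxQ : π x ∉ Q := by
        intro hx
        obtain ⟨y, hy, _⟩ := hKQ hx
        simp [hKe] at hy
      have : ‖b x‖ < ε := by
        have := hQ hxQ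
        rw [← hβval x] at *
        exact lt_of_le_of_lt (le_abs_self _) this
      simpa using this.le
    · -- main case
      obtain ⟨g₀, hg₀1, _, hg₀s, hg₀mem⟩ :=
        exists_continuous_one_zero_of_isCompact hKc isClosed_empty
          (Set.disjoint_empty _)
      set g : X → ℝ := fun y => g₀ y with hgdef
      have hgc : Continuous g := g₀.continuous
      have hgs : HasCompactSupport g := hg₀s
      have hg0 : ∀ y, 0 ≤ g y := fun y => (hg₀mem y).1
      set F : X → ℝ := fun x => ∫ t, g (t⁻¹ • x) ∂μ with hFdef
      have hFcont : Continuous F := aux_continuous_E1 μ hgc hgs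
      have hFinv : ∀ (s : G) (x : X), F (s • x) = F x := fun s x =>
        aux_invariant_E1 μ g s x
      have hFnonneg : ∀ x, 0 ≤ F x := fun x =>
        integral_nonneg (fun t => hg0 _)
      have hFposK : ∀ k ∈ K, 0 < F k := by
        intro k hk
        apply aux_pos_E1 μ hgc hgs hg0
        rw [show g k = 1 from hg₀1 hk]
        norm_num
      -- minimum of F over K
      obtain ⟨k₀, hk₀K, hk₀min⟩ := hKc.exists_isMinOn hKne hFcont.continuousOn
      set δ : ℝ := F k₀ with hδdef
      have hδpos : 0 < δ := hFposK k₀ hk₀K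
      -- the function h
      set h : X → ℂ := fun y => ((g y / max (F y) δ : ℝ) : ℂ) with hhdef
      have hden : ∀ y, 0 < max (F y) δ := fun y => lt_max_of_lt_right hδpos
      have hhc : Continuous h := by
        apply Complex.continuous_ofReal.comp
        exact hgc.div (hFcont.max continuous_const) (fun y => (hden y).ne')
      have hhs : HasCompactSupport h := by
        apply HasCompactSupport.of_support_subset_isCompact hgs
        intro y hy
        have : g y ≠ 0 := by
          intro h0
          apply hy
          simp [hhdef, h0]
        exact subset_tsupport _ this
      refine ⟨h, hhc, hhs, fun x => ?_⟩
      -- compute the integral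
      have hint : (∫ t, h (t⁻¹ • x) ∂μ) = ((F x / max (F x) δ : ℝ) : ℂ) := by
        have e1 : ∀ t : G, h (t⁻¹ • x) = ((g (t⁻¹ • x) / max (F x) δ : ℝ) : ℂ) := by
          intro t
          have : F (t⁻¹ • x) = F x := hFinv t⁻¹ x
          simp [hhdef, this]
        simp_rw [e1]
        have e2 : (∫ t, ((g (t⁻¹ • x) / max (F x) δ : ℝ) : ℂ) ∂μ)
            = (((∫ t, g (t⁻¹ • x) / max (F x) δ ∂μ : ℝ)) : ℂ) := integral_ofReal
        rw [e2, integral_div]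
      rw [hint]
      set c : ℝ := F x / max (F x) δ with hcdef
      have hc0 : 0 ≤ c := div_nonneg (hFnonneg x) (hden x).le
      have hc1 : c ≤ 1 := div_le_one_of_le₀ (le_max_left _ _) (hden x).le
      have hnorm : ‖(c : ℂ) * b x - b x‖ = (1 - c) * ‖b x‖ := by
        have : (c : ℂ) * b x - b x = ((c - 1 : ℝ) : ℂ) * b x := by
          push_cast; ring
        rw [this, norm_mul, Complex.norm_real, Real.norm_eq_abs,
          abs_of_nonpos (by linarith), neg_sub]
      rw [hnorm]
      by_cases hxQ : π x ∈ Q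
      · -- F x ≥ δ hence c = 1
        obtain ⟨k, hkK, hkx⟩ := hKQ hxQ
        have horb : x ∈ MulAction.orbit G k := by
          rw [← MulAction.orbitRel_apply]
          exact Quotient.exact hkx.symm
        obtain ⟨s, hs⟩ := horb
        have hFx : F x = F k := by rw [← hs]; exact hFinv s k
        have hFxδ : δ ≤ F x := by rw [hFx]; exact hk₀min hkK
        have hmax : max (F x) δ = F x := max_eq_left hFxδ
        have hcval : c = 1 := by
          rw [hcdef, hmax, div_self]
          exact (lt_of_lt_of_le hδpos hFxδ).ne'
        rw [hcval]
        simp [hε.le]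
      · -- ‖b x‖ < ε
        have hbx : ‖b x‖ < ε := by
          have := hQ hxQ
          rw [← hβval x] at *
          exact lt_of_le_of_lt (le_abs_self _) this
        calc (1 - c) * ‖b x‖ ≤ 1 * ‖b x‖ := by
              apply mul_le_mul_of_nonneg_right (by linarith) (norm_nonneg _)
          _ ≤ ε := by rw [one_mul]; exact hbx.le
end
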